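/- Let κ be a Mahlo cardinal. For each γ < κ, the set D_γ := {(t, h) ∈ K_κ : the height of t is > γ} is dense in K_κ and |γ|^+-directed-closed. Hence K_κ is almost κ-directed-closed. -/

import Mathlib

set_option autoImplicit false

noncomputable section

open FirstOrder Language Set

universe u

/-! ## The language of set theory (one binary relation, read as membership) -/

/-- We read the binary relation of `Language.order` as set-membership. -/
instance ZFSet.instLE : LE ZFSet.{0} := ⟨fun x y => x ∈ y⟩

instance zfStructure : Language.order.Structure ZFSet.{0} := Language.orderStructure ZFSet


instance subclassStructure (W : Set ZFSet.{0}) : Language.order.Structure W :=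
  Language.orderStructure W

/-! ## Von Neumann ordinals inside `ZFSet` -/

/-- The von Neumann ordinal associated to an ordinal. -/
noncomputable def ordZF (o : Ordinal.{0}) : ZFSet.{0} :=
  ZFSet.range (fun i : o.ToType => ordZF ((Ordinal.ToType.mk (o := o)).symm i).1)
termination_by o
decreasing_by exact ((Ordinal.ToType.mk (o := o)).symm i).2

/-- `V_θ` as a class of sets, relative to an ambient class `W`. -/
def VsetIn (W : Set ZFSet.{0}) (θ : Ordinal.{0}) : Set ZFSet.{0} :=
  {x | x ∈ W ∧ x.rank < θ}

/-- `V_θ` as a class of sets. -/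
def Vset (θ : Ordinal.{0}) : Set ZFSet.{0} := VsetIn Set.univ θ

/-- Code a set of ordinals, bounded by `b`, as a `ZFSet`. -/
def zfOfSet (X : Set Ordinal.{0}) (b : Ordinal.{0}) : ZFSet.{0} :=
  ZFSet.sep (fun z => ∃ α ∈ X, z = ordZF α) (ordZF b)

/-! ## Clubs and stationary sets -/

/-- `C` is closed and unbounded in `λ`. -/
def IsClubIn (C : Set Ordinal.{0}) (l : Ordinal.{0}) : Prop :=
  (∀ x ∈ C, x < l) ∧ (∀ a < l, ∃ b ∈ C, a ≤ b) ∧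
    (∀ a < l, (∀ b < a, ∃ c ∈ C, b < c ∧ c < a) → (0 < a) → a ∈ C)

/-- `S` is stationary in `λ`. -/
def IsStationaryIn (S : Set Ordinal.{0}) (l : Ordinal.{0}) : Prop :=
  ∀ C, IsClubIn C l → (S ∩ C).Nonempty

/-- An ordinal is (the ordinal of) an inaccessible cardinal. -/
def InaccOrd (o : Ordinal.{0}) : Prop :=
  o.card.IsInaccessible ∧ o.card.ord = o

/-- An ordinal is (the ordinal of) a cardinal. -/
def IsCardOrd (o : Ordinal.{0}) : Prop := o.card.ord = o

/-- The cardinal successor of (the cardinality of) an ordinal, as an ordinal. -/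
def cardSucc (o : Ordinal.{0}) : Ordinal.{0} := (Order.succ o.card).ord

/-- A Mahlo cardinal (as an ordinal). -/
def MahloOrd (o : Ordinal.{0}) : Prop :=
  InaccOrd o ∧ IsStationaryIn {δ | δ < o ∧ InaccOrd δ} o

/-- `θ` is a successor inaccessible: inaccessible with an inaccessible predecessor
and no inaccessibles strictly in between. -/
def SuccInacc (θ : Ordinal.{0}) : Prop :=
  InaccOrd θ ∧ ∃ μ < θ, InaccOrd μ ∧ ∀ ν, μ < ν → ν < θ → ¬ InaccOrd ν

/-- `a` is a limit ordinal. -/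
def IsLimitOrd (a : Ordinal.{0}) : Prop := 0 < a ∧ ∀ b < a, b + 1 < a

/-! ## The Lévy hierarchy of formulas (with `Σ₀ = ` quantifier-free) -/

mutual
  /-- `Σ_n` formulas (simplified Lévy hierarchy over quantifier-free formulas). -/
  inductive IsSigmaF (L : Language) (α : Type u) : ℕ → ∀ {n : ℕ}, L.BoundedFormula α n → Prop
    | qf {m} {n : ℕ} {φ : L.BoundedFormula α n} : φ.IsQF → IsSigmaF L α m φ → IsSigmaF L α m φ
    | of_qf {n : ℕ} {φ : L.BoundedFormula α n} : φ.IsQF → IsSigmaF L α 0 φ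
    | mono {m} {n : ℕ} {φ : L.BoundedFormula α n} : IsSigmaF L α m φ → IsSigmaF L α (m+1) φ
    | ex {m} {n : ℕ} {φ : L.BoundedFormula α (n+1)} :
        IsSigmaF L α (m+1) φ.ex → IsSigmaF L α (m+1) φ.ex
    | step {m} {n : ℕ} {φ : L.BoundedFormula α (n+1)} :
        IsPiF L α m φ → IsSigmaF L α (m+1) φ.ex

  /-- `Π_n` formulas. -/
  inductive IsPiF (L : Language) (α : Type u) : ℕ → ∀ {n : ℕ}, L.BoundedFormula α n → Prop
    | of_qf {n : ℕ} {φ : L.BoundedFormula α n} : φ.IsQF → IsPiF L α 0 φ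
    | mono {m} {n : ℕ} {φ : L.BoundedFormula α n} : IsPiF L α m φ → IsPiF L α (m+1) φ
    | step {m} {n : ℕ} {φ : L.BoundedFormula α (n+1)} :
        IsSigmaF L α m φ → IsPiF L α (m+1) φ.all
end

/-- `θ ∈ C^{(n)}` relative to an ambient class `W` : `V_θ ∩ W` is a
`Σ_n`-elementary substructure of `W`. -/
def InCC (W : Set ZFSet.{0}) (n : ℕ) (θ : Ordinal.{0}) : Prop :=
  ∀ (k : ℕ) (φ : Language.order.Formula (Fin k)),
    (IsSigmaF Language.order (Fin k) n φ ∨ IsPiF Language.order (Fin k) n φ) →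
    ∀ v : Fin k → (VsetIn W θ),
      φ.Realize v ↔ φ.Realize (fun i => (⟨(v i).1, (v i).2.1⟩ : W))

/-! ## Elementary embeddings of (relative) classes -/

/-- An elementary embedding `j : W → M` where `M ⊆ W` is a transitive subclass. -/
structure ClassEmbOver (W : Set ZFSet.{0}) where
  M : Set ZFSet.{0}
  M_sub : M ⊆ W
  M_trans : ∀ x ∈ M, ∀ y : ZFSet, y ∈ x → y ∈ M
  j : ZFSet.{0} → ZFSet.{0}
  maps : ∀ x, x ∈ W → j x ∈ M
  elem : ∀ (k : ℕ) (φ : Language.order.Formula (Fin k)) (v : Fin k → W),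
    φ.Realize v ↔ φ.Realize (fun i => (⟨j (v i).1, maps _ (v i).2⟩ : M))

variable {W : Set ZFSet.{0}}

/-- `j` has critical point `κ`. -/
def critAt (e : ClassEmbOver W) (κ : Ordinal.{0}) : Prop :=
  (∀ α < κ, e.j (ordZF α) = ordZF α) ∧ e.j (ordZF κ) ≠ ordZF κ

/-- The image `j(κ)` of an ordinal, as an ordinal. -/
def targ (e : ClassEmbOver W) (κ : Ordinal.{0}) : Ordinal.{0} := (e.j (ordZF κ)).rank

/-- `M^λ ∩ W ⊆ M`. -/
def SeqClosed (e : ClassEmbOver W) (l : Ordinal.{0}) : Prop :=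
  ∀ f y : ZFSet.{0}, f ∈ W → ZFSet.IsFunc (ordZF l) y f →
    (∀ z w : ZFSet, z.pair w ∈ f → w ∈ e.M) → f ∈ e.M

/-- `V_θ ⊆ M`. -/
def VsubM (e : ClassEmbOver W) (θ : Ordinal.{0}) : Prop :=
  ∀ x : ZFSet, x ∈ W → x.rank < θ → x ∈ e.M

/-- A `ZFSet` codes a set of ordinals below `l`. -/
def zfSubsetOrd (s : ZFSet.{0}) (l : Ordinal.{0}) : Prop :=
  ∀ x ∈ s, ∃ α < l, x = ordZF α

/-- The set of ordinals coded by a `ZFSet`. -/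
def toOrdSet (s : ZFSet.{0}) : Set Ordinal.{0} := {α | ordZF α ∈ s}

/-- `M` computes stationary subsets of `l` correctly. -/
def StatCorrect (e : ClassEmbOver W) (l : Ordinal.{0}) : Prop :=
  ∀ s ∈ e.M, zfSubsetOrd s l →
    (IsStationaryIn (toOrdSet s) l ↔
      ∀ C ∈ e.M, zfSubsetOrd C l → IsClubIn (toOrdSet C) l →
        (toOrdSet s ∩ toOrdSet C).Nonempty)

/-! ## Large cardinal notions -/

/-- `κ` is tall with target `θ` (relative to `W`). -/
def TallWithTarget (W : Set ZFSet.{0}) (κ θ : Ordinal.{0}) : Prop :=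
  ∃ e : ClassEmbOver W, critAt e κ ∧ SeqClosed e κ ∧ targ e κ = θ

/-- `κ` is `λ`-supercompact. -/
def IsLamSC (W : Set ZFSet.{0}) (κ l : Ordinal.{0}) : Prop :=
  ∃ e : ClassEmbOver W, critAt e κ ∧ l < targ e κ ∧ SeqClosed e l

/-- `κ` is supercompact. -/
def IsSC (W : Set ZFSet.{0}) (κ : Ordinal.{0}) : Prop :=
  ∀ l, κ < l → IsLamSC W κ l

/-- `κ` is `λ`-`C^{(n)}`-supercompact. -/
def IsLamCnSC (W : Set ZFSet.{0}) (n : ℕ) (κ l : Ordinal.{0}) : Prop :=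
  ∃ e : ClassEmbOver W, critAt e κ ∧ l < targ e κ ∧ SeqClosed e l ∧ InCC W n (targ e κ)

/-- `κ` is `C^{(n)}`-supercompact. -/
def IsCnSC (W : Set ZFSet.{0}) (n : ℕ) (κ : Ordinal.{0}) : Prop :=
  ∀ l, κ < l → IsLamCnSC W n κ l

/-- `κ` is enhanced `C^{(n)}`-tall: for every `λ > κ` there is `θ ∈ C^{(n)}` of
cofinality `> λ` such that `κ` is tall with target `θ`. -/
def EnhancedCnTall (W : Set ZFSet.{0}) (n : ℕ) (κ : Ordinal.{0}) : Prop :=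
  ∀ l, κ < l → ∃ θ, InCC W n θ ∧ l < θ.cof.ord ∧ TallWithTarget W κ θ

/-- `κ` is superstrong with target `θ`. -/
def SuperstrongTarget (W : Set ZFSet.{0}) (κ θ : Ordinal.{0}) : Prop :=
  ∃ e : ClassEmbOver W, critAt e κ ∧ targ e κ = θ ∧ VsubM e θ

/-- `κ` is enhanced superstrong with target `θ`: additionally `M^κ ⊆ M`. -/
def EnhSuperstrongTarget (W : Set ZFSet.{0}) (κ θ : Ordinal.{0}) : Prop :=
  ∃ e : ClassEmbOver W, critAt e κ ∧ targ e κ = θ ∧ VsubM e θ ∧ SeqClosed e κ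

/-- `κ` is stationary-correct superstrong with target `θ`. -/
def StatCorrectSuperstrong (W : Set ZFSet.{0}) (κ θ : Ordinal.{0}) : Prop :=
  ∃ e : ClassEmbOver W, critAt e κ ∧ targ e κ = θ ∧ VsubM e θ ∧ StatCorrect e θ

/-! ## Axiom 𝒜 -/

/-- Axiom `𝒜`, relative to `W`. -/
def AxiomA (W : Set ZFSet.{0}) : Prop :=
  (∀ α : Ordinal, ∃ κ, α < κ ∧ InaccOrd κ) ∧
  (∀ δ l, StatCorrectSuperstrong W δ l → InaccOrd l →
    ∀ θ, δ < θ → θ < l → SuccInacc θ → TallWithTarget W δ θ)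

/-- Elementary embedding between two set-sized structures `⟨A,∈⟩ → ⟨B,∈⟩`. -/
structure SetEmb (A B : Set ZFSet.{0}) where
  j : ZFSet.{0} → ZFSet.{0}
  maps : ∀ x, x ∈ A → j x ∈ B
  elem : ∀ (k : ℕ) (φ : Language.order.Formula (Fin k)) (v : Fin k → A),
    φ.Realize v ↔ φ.Realize (fun i => (⟨j (v i).1, maps _ (v i).2⟩ : B))

/-- critical point for set embeddings. -/
def setCritAt (A B : Set ZFSet.{0}) (e : SetEmb A B) (κ : Ordinal.{0}) : Prop :=
  (∀ α < κ, e.j (ordZF α) = ordZF α) ∧ e.j (ordZF κ) ≠ ordZF κ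

/-- `j(κ)` for set embeddings. -/
def setTarg (A B : Set ZFSet.{0}) (e : SetEmb A B) (κ : Ordinal.{0}) : Ordinal.{0} :=
  (e.j (ordZF κ)).rank


/-! ## Trees with a level function -/

/-- A tree on a set of ordinals, presented with a level function. -/
structure LvTree : Type 1 where
  node : Set Ordinal.{0}
  lt : Ordinal.{0} → Ordinal.{0} → Prop
  level : Ordinal.{0} → Ordinal.{0}
  lt_mem : ∀ {x y}, lt x y → x ∈ node ∧ y ∈ node
  lt_trans' : ∀ {x y z}, lt x y → lt y z → lt x z
  level_mono : ∀ {x y}, lt x y → level x < level y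
  pred_linear : ∀ {x y z}, lt y x → lt z x → lt y z ∨ y = z ∨ lt z y
  pred_ex : ∀ x ∈ node, ∀ β < level x, ∃ y, lt y x ∧ level y = β

/-- The `β`-th level of the tree. -/
def LvTree.lvl (T : LvTree) (β : Ordinal.{0}) : Set Ordinal.{0} :=
  {x | x ∈ T.node ∧ T.level x = β}

/-- The nodes of level `< β`. -/
def LvTree.below (T : LvTree) (β : Ordinal.{0}) : Set Ordinal.{0} :=
  {x | x ∈ T.node ∧ T.level x < β}

/-- Two tree-incomparable nodes. -/
def LvTree.Incomp (T : LvTree) (x y : Ordinal.{0}) : Prop :=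
  ¬ T.lt x y ∧ ¬ T.lt y x ∧ x ≠ y

/-- There is a regressive map on the `δ`-th level: `f x <_T x` and for incomparable
`x, y` every common predecessor lies below both `f x` and `f y`
(i.e. `x ∧ y <_T f x, f y`). -/
def RegressiveAt (T : LvTree) (δ : Ordinal.{0}) : Prop :=
  ∃ f : Ordinal.{0} → Ordinal.{0},
    (∀ x ∈ T.lvl δ, T.lt (f x) x) ∧
    (∀ x ∈ T.lvl δ, ∀ y ∈ T.lvl δ, T.Incomp x y →
      ∀ z, T.lt z x → T.lt z y → T.lt z (f x) ∧ T.lt z (f y))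

/-- A chain in the tree. -/
def IsTreeChain (T : LvTree) (b : Set Ordinal.{0}) : Prop :=
  b ⊆ T.node ∧ ∀ x ∈ b, ∀ y ∈ b, T.lt x y ∨ x = y ∨ T.lt y x

/-- A branch: a maximal chain. -/
def IsTreeBranch (T : LvTree) (b : Set Ordinal.{0}) : Prop :=
  IsTreeChain T b ∧ ∀ b', IsTreeChain T b' → b ⊆ b' → b = b'

/-- A cofinal branch of a tree of height `κ`. -/
def CofBranch (T : LvTree) (κ : Ordinal.{0}) (b : Set Ordinal.{0}) : Prop :=
  IsTreeBranch T b ∧ ∀ β < κ, ∃ x ∈ b, T.level x = β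

/-- A `κ`-regressive `κ`-Kurepa tree on `κ`. -/
def KurepaTree (κ : Ordinal.{0}) (T : LvTree) : Prop :=
  T.node ⊆ Set.Iio κ ∧ (∀ x ∈ T.node, T.level x < κ) ∧
  (∀ β < κ, (T.lvl β).Nonempty) ∧
  (∀ β < κ, Cardinal.mk (T.lvl β) < Cardinal.lift.{1} κ.card) ∧
  Cardinal.lift.{1} (Order.succ κ.card) ≤ Cardinal.mk {b : Set Ordinal.{0} | CofBranch T κ b} ∧
  (∀ δ < κ, InaccOrd δ → RegressiveAt T δ)

/-! ## The forcing `K_κ` adding a `κ`-regressive `κ`-Kurepa tree -/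

/-- A condition of `K_κ`: a normal tree on `κ` of successor height `top + 1` with
small levels, regressive maps at inaccessible levels, together with a one-to-one
map `h` from the top level into `κ⁺`. -/
structure KCond (κ : Ordinal.{0}) : Type 1 where
  t : LvTree
  top : Ordinal.{0}
  h : Ordinal.{0} → Ordinal.{0}
  node_sub : t.node ⊆ Set.Iio κ
  top_lt : top < κ
  level_le : ∀ x ∈ t.node, t.level x ≤ top
  levels_ne : ∀ β ≤ top, (t.lvl β).Nonempty
  small : ∀ β, Cardinal.mk (t.lvl β) < Cardinal.lift.{1} κ.card
  normal : ∀ x ∈ t.node, ∀ β, t.level x ≤ β → β ≤ top → ∃ y ∈ t.lvl β, t.lt x y ∨ x = y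
  regr : ∀ δ, δ ≤ top → InaccOrd δ → RegressiveAt t δ
  h_inj : ∀ x ∈ t.lvl top, ∀ y ∈ t.lvl top, h x = h y → x = y
  h_lt : ∀ x ∈ t.lvl top, h x < cardSucc κ

/-- The order of `K_κ`: `p ≤ q` iff the tree of `q` is the restriction of the tree
of `p` to the height of `q`, `ran(q.h) ⊆ ran(p.h)` and `q.h⁻¹(ξ) <_t p.h⁻¹(ξ)`. -/
def KLE (κ : Ordinal.{0}) (p q : KCond κ) : Prop :=
  q.top ≤ p.top ∧
  (∀ x, x ∈ q.t.node ↔ x ∈ p.t.node ∧ p.t.level x ≤ q.top) ∧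
  (∀ x ∈ q.t.node, ∀ y ∈ q.t.node, (q.t.lt x y ↔ p.t.lt x y)) ∧
  (∀ x ∈ q.t.node, q.t.level x = p.t.level x) ∧
  (∀ ξ, (∃ x ∈ q.t.lvl q.top, q.h x = ξ) → ∃ y ∈ p.t.lvl p.top, p.h y = ξ) ∧
  (∀ x ∈ q.t.lvl q.top, ∀ y ∈ p.t.lvl p.top, q.h x = p.h y → (p.t.lt x y ∨ x = y))


namespace Stmt6

open Cardinal in
lemma isRegular_lift {c : Cardinal.{0}} (h : c.IsRegular) : (Cardinal.lift.{1} c).IsRegular := by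
  constructor
  · simpa using lift_le.{1}.mpr h.1
  · rw [← Cardinal.lift_ord, ← Ordinal.lift_cof]
    exact lift_le.mpr h.2

section
variable {κ : Ordinal.{0}} (hreg : κ.card.IsRegular) (hord : κ.card.ord = κ)
  (hℵ : Cardinal.aleph0 < κ.card)

include hord in
lemma card_lt_iff {o : Ordinal.{0}} : o < κ ↔ o.card < κ.card := by
  rw [← hord, Cardinal.lt_ord, Cardinal.card_ord]

include hord hℵ in
lemma kappa_pos : 0 < κ := by
  rw [card_lt_iff hord]; simpa using Cardinal.aleph0_pos.trans hℵ

include hord hℵ in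
lemma succ_lt_kappa {o : Ordinal.{0}} (h : o < κ) : o + 1 < κ := by
  have : Order.IsSuccLimit κ.card.ord := Cardinal.isSuccLimit_ord hℵ.le
  rw [← hord] at h ⊢
  simpa [Order.succ_eq_add_one] using this.succ_lt h

include hord hℵ in
lemma add_lt_kappa {a b : Ordinal.{0}} (ha : a < κ) (hb : b < κ) : a + b < κ := by
  rw [card_lt_iff hord] at *
  rw [Ordinal.card_add]
  exact Cardinal.add_lt_of_lt hℵ.le ha hb

include hord hℵ in
lemma mul_lt_kappa {a b : Ordinal.{0}} (ha : a < κ) (hb : b < κ) : a * b < κ := by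
  rw [card_lt_iff hord] at *
  rw [Ordinal.card_mul]
  exact Cardinal.mul_lt_of_lt hℵ.le ha hb

include hreg in
lemma sum_small {ι : Type 1} (f : ι → Cardinal.{1}) (hι : Cardinal.mk ι < Cardinal.lift.{1} κ.card)
    (hf : ∀ i, f i < Cardinal.lift.{1} κ.card) : Cardinal.sum f < Cardinal.lift.{1} κ.card :=
  Cardinal.sum_lt_of_isRegular (isRegular_lift hreg) hι hf

lemma exists_fun_of_small {S : Set Ordinal.{0}} {c₀ : Cardinal.{0}}
    (hmk : Cardinal.mk S = Cardinal.lift.{1} c₀) :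
    ∃ f : c₀.out → Ordinal.{0}, Set.range f = S := by
  have : Cardinal.lift.{1,0} (Cardinal.mk c₀.out) = Cardinal.lift.{0,1} (Cardinal.mk S) := by
    rw [Cardinal.mk_out, Cardinal.lift_id']; exact hmk.symm
  obtain ⟨e⟩ := Cardinal.lift_mk_eq'.mp this
  refine ⟨fun i => (e i).1, ?_⟩
  ext x
  constructor
  · rintro ⟨i, rfl⟩; exact (e i).2
  · intro hx; exact ⟨e.symm ⟨x, hx⟩, by simp⟩

include hreg hord hℵ in
lemma small_sSup {S : Set Ordinal.{0}} (hsub : S ⊆ Set.Iio κ)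
    (hmk : Cardinal.mk S < Cardinal.lift.{1} κ.card) : sSup S < κ := by
  rcases S.eq_empty_or_nonempty with rfl | hS
  · rw [csSup_empty]; exact kappa_pos hord hℵ
  obtain ⟨c₀, hc₀, hlift⟩ := Cardinal.lt_lift_iff.mp hmk
  obtain ⟨f, hrange⟩ := exists_fun_of_small hlift.symm
  have : sSup S = iSup f := by rw [← hrange]; rfl
  rw [this]
  refine Ordinal.iSup_lt_ord ?_ ?_
  · rw [Cardinal.mk_out, ← hord, hreg.cof_eq]
    exact hc₀
  · intro i
    exact hsub (hrange ▸ Set.mem_range_self i)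

end
end Stmt6

namespace Stmt6
section
variable {κ : Ordinal.{0}} (hreg : κ.card.IsRegular) (hord : κ.card.ord = κ)
  (hℵ : Cardinal.aleph0 < κ.card)

include hreg hord hℵ in
lemma node_small (q : KCond κ) : Cardinal.mk q.t.node < Cardinal.lift.{1} κ.card := by
  have hsub : q.t.node ⊆ ⋃ (β : Set.Iic q.top), q.t.lvl β := by
    intro x hx
    exact Set.mem_iUnion.mpr ⟨⟨q.t.level x, q.level_le x hx⟩, hx, rfl⟩
  refine lt_of_le_of_lt ((Cardinal.mk_le_mk_of_subset hsub).trans Cardinal.mk_iUnion_le_sum_mk) ?_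
  refine sum_small hreg _ ?_ (fun β => q.small β)
  calc Cardinal.mk (Set.Iic q.top) ≤ Cardinal.mk (Set.Iio (q.top + 1)) :=
        Cardinal.mk_le_mk_of_subset (fun x hx => Set.mem_Iio.mpr (lt_of_le_of_lt hx (Order.lt_succ _)))
    _ = Cardinal.lift.{1} (q.top + 1).card := Ordinal.mk_Iio_ordinal _
    _ < Cardinal.lift.{1} κ.card :=
        Cardinal.lift_lt.mpr ((card_lt_iff hord).mp (succ_lt_kappa hord hℵ q.top_lt))

lemma KLE_refl (p : KCond κ) : KLE κ p p :=
  ⟨le_refl _, fun x => ⟨fun h => ⟨h, p.level_le x h⟩, And.left⟩,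
   fun _ _ _ _ => Iff.rfl, fun _ _ => rfl, fun _ h => h,
   fun x hx y hy h => Or.inr (p.h_inj x hx y hy h)⟩

/-- If `r ≤ p` with equal tops, then `p` is below anything `r` is below. -/
lemma KLE_of_eqtop {r p q : KCond κ} (hrp : KLE κ r p) (htop : r.top = p.top)
    (hrq : KLE κ r q) : KLE κ p q := by
  obtain ⟨-, hmem, hlt, hlev, hran, hcomp⟩ := hrp
  have node_eq : p.t.node = r.t.node := by
    ext x
    rw [hmem x]
    exact ⟨And.left, fun h => ⟨h, (r.level_le x h).trans htop.le⟩⟩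
  have lvl_top_eq : p.t.lvl p.top = r.t.lvl r.top := by
    ext x
    constructor
    · rintro ⟨hx, hlx⟩
      have hxr : x ∈ r.t.node := node_eq ▸ hx
      exact ⟨hxr, by rw [← hlev x hx, hlx, ← htop]⟩
    · rintro ⟨hx, hlx⟩
      have hxp : x ∈ p.t.node := node_eq ▸ hx
      exact ⟨hxp, by rw [hlev x hxp, hlx, htop]⟩
  have h_eq : ∀ x ∈ p.t.lvl p.top, p.h x = r.h x := by
    intro x hx
    obtain ⟨y, hy, hxy⟩ := hran (p.h x) ⟨x, hx, rfl⟩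
    rcases hcomp x hx y hy hxy.symm with hlt' | rfl
    · exact absurd (r.t.level_mono hlt') (by rw [(lvl_top_eq ▸ hx : x ∈ r.t.lvl r.top).2, hy.2]; exact lt_irrefl _)
    · exact hxy.symm
  obtain ⟨hq1, hq2, hq3, hq4, hq5, hq6⟩ := hrq
  have qsubr : q.t.node ⊆ r.t.node := fun x hx => ((hq2 x).mp hx).1
  refine ⟨hq1.trans_eq htop, ?_, ?_, ?_, ?_, ?_⟩
  · intro x
    rw [hq2 x, node_eq]
    constructor
    · rintro ⟨hx, hlx⟩
      exact ⟨hx, by rw [hlev x (node_eq ▸ hx)]; exact hlx⟩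
    · rintro ⟨hx, hlx⟩
      exact ⟨hx, by rw [← hlev x (node_eq ▸ hx)]; exact hlx⟩
  · intro x hx y hy
    rw [hq3 x hx y hy,
      hlt x (node_eq ▸ qsubr hx) y (node_eq ▸ qsubr hy)]
  · intro x hx
    rw [hq4 x hx, ← hlev x (node_eq ▸ qsubr hx)]
  · intro ξ hξ
    obtain ⟨y, hy, hyξ⟩ := hq5 ξ hξ
    refine ⟨y, lvl_top_eq ▸ hy, ?_⟩
    rw [h_eq y (lvl_top_eq ▸ hy)]
    exact hyξ
  · intro x hx y hy hxy
    have hyr : y ∈ r.t.lvl r.top := lvl_top_eq ▸ hy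
    rcases hq6 x hx y hyr (by rw [hxy, h_eq y hy]) with hlt' | rfl
    · left
      rw [hlt x (node_eq ▸ qsubr hx.1) y (node_eq ▸ hy.1)]
      exact hlt'
    · exact Or.inr rfl

end
end Stmt6

namespace Stmt6
section
variable {κ : Ordinal.{0}} (hreg : κ.card.IsRegular) (hord : κ.card.ord = κ)
  (hℵ : Cardinal.aleph0 < κ.card)

/-- The linear chain `0 < 1 < ⋯ < β` as a levelled tree. -/
def chainTree (β : Ordinal.{0}) : LvTree where
  node := Set.Iio (β+1)
  lt x y := x < y ∧ y < β + 1
  level := id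
  lt_mem := fun {x y} h => ⟨Set.mem_Iio.mpr (h.1.trans h.2), h.2⟩
  lt_trans' := fun {x y z} h h' => ⟨h.1.trans h'.1, h'.2⟩
  level_mono := fun h => h.1
  pred_linear := by
    rintro x y z ⟨hyx, hx⟩ ⟨hzx, -⟩
    rcases lt_trichotomy y z with h | h | h
    exacts [Or.inl ⟨h, hzx.trans hx⟩, Or.inr (Or.inl h), Or.inr (Or.inr ⟨h, hyx.trans hx⟩)]
  pred_ex := fun x hx b hb => ⟨b, ⟨hb, hx⟩, rfl⟩

lemma chainTree_lvl (β b : Ordinal.{0}) (hb : b ≤ β) : (chainTree β).lvl b = {b} := by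
  ext x
  simp only [LvTree.lvl, chainTree, Set.mem_setOf_eq, id_eq, Set.mem_singleton_iff]
  exact ⟨fun h => h.2, fun h => ⟨h ▸ Set.mem_Iio.mpr (Order.lt_succ_iff.mpr hb), h⟩⟩

include hord hℵ in
/-- There is a condition (a linear chain) with any prescribed top `β < κ`. -/
lemma exists_chain_cond (β : Ordinal.{0}) (hβ : β < κ) : ∃ p : KCond κ, p.top = β := by
  have hβ1 : β + 1 < κ := succ_lt_kappa hord hℵ hβ
  refine ⟨⟨chainTree β, β, fun _ => 0, ?_, hβ, ?_, ?_, ?_, ?_, ?_, ?_, ?_⟩, rfl⟩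
  · exact fun x hx => Set.mem_Iio.mpr (hx.out.trans hβ1)
  · intro x hx
    simpa [chainTree] using Order.lt_succ_iff.mp hx.out
  · intro b hb
    rw [chainTree_lvl β b hb]
    exact ⟨b, rfl⟩
  · intro b
    rcases le_or_gt b β with hb | hb
    · rw [chainTree_lvl β b hb, Cardinal.mk_singleton]
      exact lt_of_lt_of_le Cardinal.one_lt_aleph0 (Cardinal.aleph0_le_lift.mpr hℵ.le)
    · have : (chainTree β).lvl b = ∅ := by
        ext x
        simp only [LvTree.lvl, chainTree, Set.mem_setOf_eq, id_eq, Set.mem_empty_iff_false,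
          iff_false, not_and]
        rintro hx rfl
        exact absurd (Order.lt_succ_iff.mp hx.out) hb.not_ge
      rw [this]
      simp only [Cardinal.mk_emptyCollection]
      exact lt_of_lt_of_le Cardinal.aleph0_pos (Cardinal.aleph0_le_lift.mpr hℵ.le)
  · intro x hx b hxb hbβ
    refine ⟨b, by rw [chainTree_lvl β b hbβ]; rfl, ?_⟩
    rcases lt_or_eq_of_le (hxb : (x : Ordinal) ≤ b) with h | h
    · exact Or.inl ⟨h, Order.lt_succ_iff.mpr hbβ⟩
    · exact Or.inr h
  · intro δ hδ hδi
    refine ⟨fun _ => 0, ?_, ?_⟩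
    · intro x hx
      rw [chainTree_lvl β δ hδ] at hx
      subst hx
      have : (0:Ordinal) < x := by
        rw [← hδi.2, Cardinal.lt_ord]
        simpa using Cardinal.aleph0_pos.trans hδi.1.1
      exact ⟨this, Order.lt_succ_iff.mpr hδ⟩
    · intro x hx y hy hinc
      rw [chainTree_lvl β δ hδ] at hx hy
      exact absurd (hx.trans hy.symm) hinc.2.2
  · intro x hx y hy _
    rw [chainTree_lvl β β le_rfl] at hx hy
    exact hx.trans hy.symm
  · rintro x -
    rw [cardSucc, Cardinal.lt_ord]
    simpa using Cardinal.aleph0_pos.trans_le (Order.le_succ _ |>.trans' hℵ.le)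

end
end Stmt6

namespace Stmt6
section Ext
variable {κ : Ordinal.{0}} (p : KCond κ) (Λ Tn : Ordinal.{0})

/-- Code for the new node above `x` at level `b`. -/
def codE (Λ b x : Ordinal.{0}) : Ordinal.{0} := Λ * (1 + b) + x

/-- The set of new nodes. -/
def extN : Set Ordinal.{0} :=
  {n | ∃ x ∈ p.t.lvl p.top, ∃ b, p.top < b ∧ b ≤ Tn ∧ n = codE Λ b x}

lemma codE_mod {Λ x : Ordinal.{0}} (hx : x < Λ) (b : Ordinal.{0}) : codE Λ b x % Λ = x := by
  rw [codE, Ordinal.mul_add_mod_self, Ordinal.mod_eq_of_lt hx]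

lemma codE_div {Λ x : Ordinal.{0}} (hx : x < Λ) (b : Ordinal.{0}) :
    codE Λ b x / Λ = 1 + b := by
  have hΛ0 : Λ ≠ 0 := fun h => absurd (h ▸ hx) (by simp)
  rw [codE, Ordinal.mul_add_div _ hΛ0, Ordinal.div_eq_zero_of_lt hx, add_zero]

lemma codE_ge (Λ b x : Ordinal.{0}) : Λ ≤ codE Λ b x :=
  le_trans (by simpa using mul_le_mul_right (le_self_add : (1 : Ordinal.{0}) ≤ 1 + b) Λ)
    (le_self_add (a := Λ * (1 + b)) (b := x))

variable (hΛ : ∀ x ∈ p.t.node, x < Λ)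

include hΛ in
lemma extN_decode {n : Ordinal.{0}} (hn : n ∈ extN p Λ Tn) :
    n % Λ ∈ p.t.lvl p.top ∧ p.top < n / Λ - 1 ∧ n / Λ - 1 ≤ Tn ∧
      n / Λ = 1 + (n / Λ - 1) ∧ n = codE Λ (n / Λ - 1) (n % Λ) := by
  obtain ⟨x, hx, b, hb1, hb2, rfl⟩ := hn
  have hxΛ : x < Λ := hΛ x hx.1
  rw [codE_mod hxΛ, codE_div hxΛ, Ordinal.add_sub_cancel]
  exact ⟨hx, hb1, hb2, rfl, rfl⟩

include hΛ in
lemma extN_not_node {n : Ordinal.{0}} (hn : n ∈ extN p Λ Tn) : n ∉ p.t.node := by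
  intro hmem
  obtain ⟨x, hx, b, hb1, hb2, rfl⟩ := hn
  exact absurd (hΛ _ hmem) (not_lt.mpr (codE_ge Λ b x))

/-- The order of the extended tree. -/
def extLt (n m : Ordinal.{0}) : Prop :=
  p.t.lt n m ∨ (m ∈ extN p Λ Tn ∧
    ((n ∈ p.t.node ∧ (p.t.lt n (m % Λ) ∨ n = m % Λ)) ∨
     (n ∈ extN p Λ Tn ∧ n % Λ = m % Λ ∧ n / Λ < m / Λ)))

open Classical in
/-- The level function of the extended tree. -/
noncomputable def extLevel (n : Ordinal.{0}) : Ordinal.{0} :=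
  if n ∈ p.t.node then p.t.level n else n / Λ - 1

include hΛ in
lemma extLt_to_old {n m : Ordinal.{0}} (h : extLt p Λ Tn n m) (hm : m ∈ p.t.node) :
    p.t.lt n m := by
  rcases h with h | ⟨hmN, -⟩
  · exact h
  · exact absurd hm (extN_not_node p Λ Tn hΛ hmN)

include hΛ in
lemma extLt_from_new {n m : Ordinal.{0}} (h : extLt p Λ Tn n m) (hn : n ∈ extN p Λ Tn) :
    m ∈ extN p Λ Tn ∧ n % Λ = m % Λ ∧ n / Λ < m / Λ := by
  have hnn := extN_not_node p Λ Tn hΛ hn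
  rcases h with h | ⟨hmN, ⟨hnO, -⟩ | ⟨-, h2⟩⟩
  · exact absurd (p.t.lt_mem h).1 hnn
  · exact absurd hnO hnn
  · exact ⟨hmN, h2⟩

include hΛ in
lemma extLevel_new {n : Ordinal.{0}} (hn : n ∈ extN p Λ Tn) :
    extLevel p Λ n = n / Λ - 1 := if_neg (extN_not_node p Λ Tn hΛ hn)

lemma extLevel_old {n : Ordinal.{0}} (hn : n ∈ p.t.node) :
    extLevel p Λ n = p.t.level n := if_pos hn

include hΛ in
lemma extN_eq_of_base_lvl {n m : Ordinal.{0}} (hn : n ∈ extN p Λ Tn) (hm : m ∈ extN p Λ Tn)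
    (hbase : n % Λ = m % Λ) (hlvl : n / Λ - 1 = m / Λ - 1) : n = m := by
  obtain ⟨-, -, -, hdn, -⟩ := extN_decode p Λ Tn hΛ hn
  obtain ⟨-, -, -, hdm, -⟩ := extN_decode p Λ Tn hΛ hm
  have hdiv : n / Λ = m / Λ := by rw [hdn, hdm, hlvl]
  rw [← Ordinal.div_add_mod n Λ, ← Ordinal.div_add_mod m Λ, hdiv, hbase]

/-- The extended tree: chains of new nodes placed above each top node of `p`. -/
noncomputable def extTree : LvTree where
  node := p.t.node ∪ extN p Λ Tn
  lt := extLt p Λ Tn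
  level := extLevel p Λ
  lt_mem := by
    rintro n m (h | ⟨hm, ⟨hn, -⟩ | ⟨hn, -⟩⟩)
    · exact ⟨Or.inl (p.t.lt_mem h).1, Or.inl (p.t.lt_mem h).2⟩
    · exact ⟨Or.inl hn, Or.inr hm⟩
    · exact ⟨Or.inr hn, Or.inr hm⟩
  lt_trans' := by
    rintro a b c hab (hbc | ⟨hcN, ⟨hbO, hbw⟩ | ⟨hbN, hbase, hdiv⟩⟩)
    · exact Or.inl (p.t.lt_trans' (extLt_to_old p Λ Tn hΛ hab (p.t.lt_mem hbc).1) hbc)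
    · -- b old, c new
      have hab' : p.t.lt a b := extLt_to_old p Λ Tn hΛ hab hbO
      refine Or.inr ⟨hcN, Or.inl ⟨(p.t.lt_mem hab').1, Or.inl ?_⟩⟩
      rcases hbw with h | rfl
      · exact p.t.lt_trans' hab' h
      · exact hab'
    · -- b new, c new, same base
      rcases hab with h | ⟨hbN', ⟨haO, haw⟩ | ⟨haN, habase, hadiv⟩⟩
      · exact absurd (p.t.lt_mem h).2 (extN_not_node p Λ Tn hΛ hbN)
      · refine Or.inr ⟨hcN, Or.inl ⟨haO, ?_⟩⟩
        rw [← hbase]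
        exact haw
      · exact Or.inr ⟨hcN, Or.inr ⟨haN, habase.trans hbase, hadiv.trans hdiv⟩⟩
  level_mono := by
    rintro n m (h | ⟨hmN, hw⟩)
    · rw [extLevel_old p Λ (p.t.lt_mem h).1, extLevel_old p Λ (p.t.lt_mem h).2]
      exact p.t.level_mono h
    · obtain ⟨hbase, htop, -, hdm, -⟩ := extN_decode p Λ Tn hΛ hmN
      rw [extLevel_new p Λ Tn hΛ hmN]
      rcases hw with ⟨hnO, hw⟩ | ⟨hnN, hbase', hdiv⟩
      · rw [extLevel_old p Λ hnO]
        refine lt_of_le_of_lt ?_ htop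
        rcases hw with h | rfl
        · rw [← hbase.2]
          exact le_of_lt (p.t.level_mono h)
        · exact le_of_eq hbase.2
      · obtain ⟨-, -, -, hdn, -⟩ := extN_decode p Λ Tn hΛ hnN
        rw [extLevel_new p Λ Tn hΛ hnN]
        have h2 := hdiv
        rw [hdn, hdm] at h2
        exact (add_lt_add_iff_left 1).mp h2
  pred_linear := by
    rintro x y z hyx hzx
    by_cases hxO : x ∈ p.t.node
    · have hy := extLt_to_old p Λ Tn hΛ hyx hxO
      have hz := extLt_to_old p Λ Tn hΛ hzx hxO
      rcases p.t.pred_linear hy hz with h | h | h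
      exacts [Or.inl (Or.inl h), Or.inr (Or.inl h), Or.inr (Or.inr (Or.inl h))]
    · have hxN : x ∈ extN p Λ Tn := by
        rcases hyx with h | ⟨hm, -⟩
        · exact absurd (p.t.lt_mem h).2 hxO
        · exact hm
      have key : ∀ u, extLt p Λ Tn u x →
          (u ∈ p.t.node ∧ (p.t.lt u (x % Λ) ∨ u = x % Λ)) ∨
          (u ∈ extN p Λ Tn ∧ u % Λ = x % Λ ∧ u / Λ < x / Λ) := by
        intro u hu
        rcases hu with h | ⟨-, h⟩
        · exact absurd (p.t.lt_mem h).2 hxO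
        · exact h
      rcases key y hyx with ⟨hyO, hyw⟩ | ⟨hyN, hybase, hydiv⟩ <;>
        rcases key z hzx with ⟨hzO, hzw⟩ | ⟨hzN, hzbase, hzdiv⟩
      · rcases hyw with hy | hy <;> rcases hzw with hz | hz
        · rcases p.t.pred_linear hy hz with h | h | h
          exacts [Or.inl (Or.inl h), Or.inr (Or.inl h), Or.inr (Or.inr (Or.inl h))]
        · exact Or.inl (Or.inl (by rw [hz]; exact hy))
        · exact Or.inr (Or.inr (Or.inl (by rw [hy]; exact hz)))
        · exact Or.inr (Or.inl (hy.trans hz.symm))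
      · refine Or.inl (Or.inr ⟨hzN, Or.inl ⟨hyO, ?_⟩⟩)
        rw [hzbase]
        exact hyw
      · refine Or.inr (Or.inr (Or.inr ⟨hyN, Or.inl ⟨hzO, ?_⟩⟩))
        rw [hybase]
        exact hzw
      · rcases lt_trichotomy (y / Λ) (z / Λ) with h | h | h
        · exact Or.inl (Or.inr ⟨hzN, Or.inr ⟨hyN, hybase.trans hzbase.symm, h⟩⟩)
        · exact Or.inr (Or.inl (extN_eq_of_base_lvl p Λ Tn hΛ hyN hzN
            (hybase.trans hzbase.symm) (by rw [h])))
        · exact Or.inr (Or.inr (Or.inr ⟨hyN, Or.inr ⟨hzN, hzbase.trans hybase.symm, h⟩⟩))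
  pred_ex := by
    rintro x hx b hb
    rcases hx with hxO | hxN
    · rw [extLevel_old p Λ hxO] at hb
      obtain ⟨y, hy, hlev⟩ := p.t.pred_ex x hxO b hb
      exact ⟨y, Or.inl hy, by rw [extLevel_old p Λ (p.t.lt_mem hy).1, hlev]⟩
    · obtain ⟨hwx, hxtop, hxle, hdx, -⟩ := extN_decode p Λ Tn hΛ hxN
      rw [extLevel_new p Λ Tn hΛ hxN] at hb
      rcases lt_trichotomy b p.top with h | rfl | h
      · obtain ⟨y, hy, hlev⟩ := p.t.pred_ex (x % Λ) hwx.1 b (by rw [hwx.2]; exact h)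
        exact ⟨y, Or.inr ⟨hxN, Or.inl ⟨(p.t.lt_mem hy).1, Or.inl hy⟩⟩,
          by rw [extLevel_old p Λ (p.t.lt_mem hy).1, hlev]⟩
      · exact ⟨x % Λ, Or.inr ⟨hxN, Or.inl ⟨hwx.1, Or.inr rfl⟩⟩,
          by rw [extLevel_old p Λ hwx.1, hwx.2]⟩
      · have hN : codE Λ b (x % Λ) ∈ extN p Λ Tn :=
          ⟨x % Λ, hwx, b, h, le_of_lt (lt_of_lt_of_le hb hxle), rfl⟩
        refine ⟨codE Λ b (x % Λ), Or.inr ⟨hxN, Or.inr ⟨hN, ?_, ?_⟩⟩, ?_⟩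
        · exact codE_mod (hΛ _ hwx.1) b
        · rw [codE_div (hΛ _ hwx.1), hdx]
          exact (add_lt_add_iff_left 1).mpr hb
        · rw [extLevel_new p Λ Tn hΛ hN, codE_div (hΛ _ hwx.1), Ordinal.add_sub_cancel]

end Ext
end Stmt6

namespace Stmt6
section Ext2
variable {κ : Ordinal.{0}} (p : KCond κ) (Λ Tn : Ordinal.{0})
  (hΛ : ∀ x ∈ p.t.node, x < Λ)

include hΛ in
lemma ext_lvl_low {β : Ordinal.{0}} (hβ : β ≤ p.top) :
    (extTree p Λ Tn hΛ).lvl β = p.t.lvl β := by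
  ext x
  constructor
  · rintro ⟨hO | hN, hlev⟩
    · exact ⟨hO, by rw [← extLevel_old p Λ hO]; exact hlev⟩
    · obtain ⟨-, h2, -, -, -⟩ := extN_decode p Λ Tn hΛ hN
      rw [show (extTree p Λ Tn hΛ).level x = extLevel p Λ x from rfl,
        extLevel_new p Λ Tn hΛ hN] at hlev
      exact absurd (hlev ▸ h2) (not_lt.mpr hβ)
  · rintro ⟨hO, hlev⟩
    exact ⟨Or.inl hO, by rw [show (extTree p Λ Tn hΛ).level x = extLevel p Λ x from rfl,
      extLevel_old p Λ hO]; exact hlev⟩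

include hΛ in
lemma ext_lvl_high {β : Ordinal.{0}} (hβ1 : p.top < β) (hβ2 : β ≤ Tn) :
    (extTree p Λ Tn hΛ).lvl β = (fun x => codE Λ β x) '' (p.t.lvl p.top) := by
  ext n
  constructor
  · rintro ⟨hO | hN, hlev⟩
    · have := p.level_le n hO
      rw [show (extTree p Λ Tn hΛ).level n = extLevel p Λ n from rfl,
        extLevel_old p Λ hO] at hlev
      exact absurd (hlev ▸ this) (not_le.mpr hβ1)
    · obtain ⟨h1, -, -, -, h5⟩ := extN_decode p Λ Tn hΛ hN
      rw [show (extTree p Λ Tn hΛ).level n = extLevel p Λ n from rfl,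
        extLevel_new p Λ Tn hΛ hN] at hlev
      exact ⟨n % Λ, h1, by rw [← hlev]; exact h5.symm⟩
  · rintro ⟨x, hx, rfl⟩
    have hN : codE Λ β x ∈ extN p Λ Tn := ⟨x, hx, β, hβ1, hβ2, rfl⟩
    refine ⟨Or.inr hN, ?_⟩
    rw [show (extTree p Λ Tn hΛ).level _ = extLevel p Λ _ from rfl,
      extLevel_new p Λ Tn hΛ hN, codE_div (hΛ _ hx.1), Ordinal.add_sub_cancel]

include hΛ in
lemma ext_lvl_empty {β : Ordinal.{0}} (hT : p.top ≤ Tn) (hβ : Tn < β) :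
    (extTree p Λ Tn hΛ).lvl β = ∅ := by
  ext n
  simp only [Set.mem_empty_iff_false, iff_false]
  rintro ⟨hO | hN, hlev⟩
  · have := p.level_le n hO
    rw [show (extTree p Λ Tn hΛ).level n = extLevel p Λ n from rfl,
      extLevel_old p Λ hO] at hlev
    exact absurd (hlev ▸ this) (not_le.mpr (hT.trans_lt hβ))
  · obtain ⟨-, -, h3, -, -⟩ := extN_decode p Λ Tn hΛ hN
    rw [show (extTree p Λ Tn hΛ).level n = extLevel p Λ n from rfl,
      extLevel_new p Λ Tn hΛ hN] at hlev
    exact absurd (hlev ▸ h3) (not_le.mpr hβ)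

include hΛ in
lemma ext_lt_old_iff {x y : Ordinal.{0}} (hy : y ∈ p.t.node) :
    (extLt p Λ Tn x y ↔ p.t.lt x y) :=
  ⟨fun h => extLt_to_old p Λ Tn hΛ h hy, Or.inl⟩

variable (hreg : κ.card.IsRegular) (hord : κ.card.ord = κ) (hℵ : Cardinal.aleph0 < κ.card)

include hord hℵ in
lemma one_lt_kappa : 1 < κ := by
  rw [card_lt_iff hord]
  simpa using Cardinal.one_lt_aleph0.trans hℵ

include hord hℵ in
lemma empty_lvl_small : Cardinal.mk (∅ : Set Ordinal.{0}) < Cardinal.lift.{1} κ.card := by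
  simp only [Cardinal.mk_emptyCollection]
  exact lt_of_lt_of_le Cardinal.aleph0_pos (Cardinal.aleph0_le_lift.mpr hℵ.le)

/-- The extension of `p` to a condition of top `Tn`. -/
noncomputable def extCond (hT : p.top < Tn) (hTκ : Tn < κ) (hΛκ : Λ < κ)
    (hreg : κ.card.IsRegular) (hord : κ.card.ord = κ) (hℵ : Cardinal.aleph0 < κ.card) :
    KCond κ where
  t := extTree p Λ Tn hΛ
  top := Tn
  h n := p.h (n % Λ)
  node_sub := by
    rintro n (hO | hN)
    · exact p.node_sub hO
    · obtain ⟨x, hx, b, hb1, hb2, rfl⟩ := hN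
      refine Set.mem_Iio.mpr (add_lt_kappa hord hℵ (mul_lt_kappa hord hℵ hΛκ
        (add_lt_kappa hord hℵ (one_lt_kappa hord hℵ) (hb2.trans_lt hTκ))) ?_)
      exact p.node_sub hx.1
  top_lt := hTκ
  level_le := by
    rintro n (hO | hN)
    · rw [show (extTree p Λ Tn hΛ).level n = extLevel p Λ n from rfl, extLevel_old p Λ hO]
      exact (p.level_le n hO).trans hT.le
    · obtain ⟨-, -, h3, -, -⟩ := extN_decode p Λ Tn hΛ hN
      rw [show (extTree p Λ Tn hΛ).level n = extLevel p Λ n from rfl,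
        extLevel_new p Λ Tn hΛ hN]
      exact h3
  levels_ne := by
    intro β hβ
    rcases le_or_gt β p.top with h | h
    · rw [ext_lvl_low p Λ Tn hΛ h]
      exact p.levels_ne β (h.trans hT.le |>.trans (le_refl Tn) |> fun _ => h)
    · rw [ext_lvl_high p Λ Tn hΛ h hβ]
      obtain ⟨x, hx⟩ := p.levels_ne p.top le_rfl
      exact ⟨codE Λ β x, x, hx, rfl⟩
  small := by
    intro β
    rcases le_or_gt β p.top with h | h
    · rw [ext_lvl_low p Λ Tn hΛ h]
      exact p.small β
    · rcases le_or_gt β Tn with h2 | h2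
      · rw [ext_lvl_high p Λ Tn hΛ h h2]
        exact lt_of_le_of_lt (Cardinal.mk_image_le) (p.small p.top)
      · rw [ext_lvl_empty p Λ Tn hΛ hT.le h2]
        exact empty_lvl_small hord hℵ
  normal := by
    rintro x hx β hβ1 hβ2
    rcases hx with hO | hN
    · rw [show (extTree p Λ Tn hΛ).level x = extLevel p Λ x from rfl,
        extLevel_old p Λ hO] at hβ1
      rcases le_or_gt β p.top with h | h
      · obtain ⟨y, hy, hor⟩ := p.normal x hO β hβ1 h
        exact ⟨y, by rw [ext_lvl_low p Λ Tn hΛ h]; exact hy,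
          by rcases hor with h' | h'; exacts [Or.inl (Or.inl h'), Or.inr h']⟩
      · obtain ⟨w, hw, hor⟩ := p.normal x hO p.top (p.level_le x hO) le_rfl
        refine ⟨codE Λ β w, by rw [ext_lvl_high p Λ Tn hΛ h hβ2]; exact ⟨w, hw, rfl⟩, ?_⟩
        have hN' : codE Λ β w ∈ extN p Λ Tn := ⟨w, hw, β, h, hβ2, rfl⟩
        refine Or.inl (Or.inr ⟨hN', Or.inl ⟨hO, ?_⟩⟩)
        rw [codE_mod (hΛ _ hw.1)]
        exact hor
    · obtain ⟨hwx, hxtop, hxle, hdx, -⟩ := extN_decode p Λ Tn hΛ hN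
      rw [show (extTree p Λ Tn hΛ).level x = extLevel p Λ x from rfl,
        extLevel_new p Λ Tn hΛ hN] at hβ1
      rcases eq_or_lt_of_le hβ1 with heq | hlt
      · refine ⟨x, ?_, Or.inr rfl⟩
        refine ⟨Or.inr hN, ?_⟩
        rw [show (extTree p Λ Tn hΛ).level x = extLevel p Λ x from rfl,
          extLevel_new p Λ Tn hΛ hN]
        exact heq
      · have hN' : codE Λ β (x % Λ) ∈ extN p Λ Tn := ⟨x % Λ, hwx, β, hxtop.trans hlt, hβ2, rfl⟩
        refine ⟨codE Λ β (x % Λ),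
          by rw [ext_lvl_high p Λ Tn hΛ (hxtop.trans hlt) hβ2]; exact ⟨x % Λ, hwx, rfl⟩, ?_⟩
        refine Or.inl (Or.inr ⟨hN', Or.inr ⟨hN, (codE_mod (hΛ _ hwx.1) β).symm, ?_⟩⟩)
        rw [codE_div (hΛ _ hwx.1), hdx]
        exact (add_lt_add_iff_left 1).mpr hlt
  regr := by
    intro δ hδ hδi
    rcases le_or_gt δ p.top with h | h
    · obtain ⟨f, hf1, hf2⟩ := p.regr δ h hδi
      refine ⟨f, ?_, ?_⟩
      · intro x hx
        rw [ext_lvl_low p Λ Tn hΛ h] at hx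
        exact Or.inl (hf1 x hx)
      · intro x hx y hy hinc z hzx hzy
        rw [ext_lvl_low p Λ Tn hΛ h] at hx hy
        have hinc' : p.t.Incomp x y := by
          refine ⟨fun hc => hinc.1 (Or.inl hc), fun hc => hinc.2.1 (Or.inl hc), hinc.2.2⟩
        have hz1 : p.t.lt z x := extLt_to_old p Λ Tn hΛ hzx hx.1
        have hz2 : p.t.lt z y := extLt_to_old p Λ Tn hΛ hzy hy.1
        obtain ⟨h1, h2⟩ := hf2 x hx y hy hinc' z hz1 hz2
        exact ⟨Or.inl h1, Or.inl h2⟩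
    · refine ⟨fun n => n % Λ, ?_, ?_⟩
      · intro x hx
        rw [ext_lvl_high p Λ Tn hΛ h hδ] at hx
        obtain ⟨w, hw, hxe⟩ := hx
        have hxe' : codE Λ δ w = x := hxe
        subst hxe'
        have hN' : codE Λ δ w ∈ extN p Λ Tn := ⟨w, hw, δ, h, hδ, rfl⟩
        show extLt p Λ Tn (codE Λ δ w % Λ) (codE Λ δ w)
        rw [codE_mod (hΛ _ hw.1)]
        exact Or.inr ⟨hN', Or.inl ⟨hw.1, Or.inr (codE_mod (hΛ _ hw.1) δ).symm⟩⟩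
      · intro x hx y hy hinc z hzx hzy
        rw [ext_lvl_high p Λ Tn hΛ h hδ] at hx hy
        obtain ⟨wx, hwx, hxe⟩ := hx
        obtain ⟨wy, hwy, hye⟩ := hy
        have hxe' : codE Λ δ wx = x := hxe
        have hye' : codE Λ δ wy = y := hye
        subst hxe'
        subst hye'
        have hwxy : wx ≠ wy := by
          rintro rfl
          exact hinc.2.2 rfl
        have hz : ∀ {w}, w ∈ p.t.lvl p.top →
            extLt p Λ Tn z (codE Λ δ w) →
            (p.t.lt z w ∨ z = w) ∨ (z ∈ extN p Λ Tn ∧ z % Λ = w) := by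
          intro w hw hzlt
          rcases hzlt with h' | ⟨-, ⟨hzO, hzw⟩ | ⟨hzN, hzb, -⟩⟩
          · exact absurd (p.t.lt_mem h').2
              (extN_not_node p Λ Tn hΛ ⟨w, hw, δ, h, hδ, rfl⟩)
          · rw [codE_mod (hΛ _ hw.1)] at hzw
            exact Or.inl hzw
          · rw [codE_mod (hΛ _ hw.1)] at hzb
            exact Or.inr ⟨hzN, hzb⟩
        have hzx' := hz hwx hzx
        have hzy' := hz hwy hzy
        have hzlt : p.t.lt z wx ∧ p.t.lt z wy := by
          by_cases hzN : z ∈ extN p Λ Tn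
          · rcases hzx' with hx1 | ⟨-, hzb⟩
            · rcases hx1 with hx1 | rfl
              · exact absurd (p.t.lt_mem hx1).1 (extN_not_node p Λ Tn hΛ hzN)
              · exact absurd hwx.1 (extN_not_node p Λ Tn hΛ hzN)
            · rcases hzy' with hy1 | ⟨-, hzb'⟩
              · rcases hy1 with hy1 | rfl
                · exact absurd (p.t.lt_mem hy1).1 (extN_not_node p Λ Tn hΛ hzN)
                · exact absurd hwy.1 (extN_not_node p Λ Tn hΛ hzN)
              · exact absurd (hzb.symm.trans hzb') hwxy
          · have hx1 : p.t.lt z wx ∨ z = wx := by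
              rcases hzx' with hx1 | ⟨hzN', -⟩
              · exact hx1
              · exact absurd hzN' hzN
            have hy1 : p.t.lt z wy ∨ z = wy := by
              rcases hzy' with hy1 | ⟨hzN', -⟩
              · exact hy1
              · exact absurd hzN' hzN
            rcases hx1 with hx1 | rfl
            · rcases hy1 with hy1 | rfl
              · exact ⟨hx1, hy1⟩
              · have := p.t.level_mono hx1
                rw [hwx.2, hwy.2] at this
                exact absurd this (lt_irrefl _)
            · rcases hy1 with hy1 | hzz
              · have := p.t.level_mono hy1
                rw [hwx.2, hwy.2] at this
                exact absurd this (lt_irrefl _)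
              · exact absurd hzz hwxy
        show extLt p Λ Tn z (codE Λ δ wx % Λ) ∧ extLt p Λ Tn z (codE Λ δ wy % Λ)
        rw [codE_mod (hΛ _ hwx.1), codE_mod (hΛ _ hwy.1)]
        exact ⟨Or.inl hzlt.1, Or.inl hzlt.2⟩
  h_inj := by
    intro x hx y hy hxy
    rw [show (extTree p Λ Tn hΛ).lvl Tn = _ from ext_lvl_high p Λ Tn hΛ hT le_rfl] at hx hy
    obtain ⟨wx, hwx, hxe⟩ := hx
    obtain ⟨wy, hwy, hye⟩ := hy
    have hxe' : codE Λ Tn wx = x := hxe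
    have hye' : codE Λ Tn wy = y := hye
    subst hxe'
    subst hye'
    have hxy' : p.h (codE Λ Tn wx % Λ) = p.h (codE Λ Tn wy % Λ) := hxy
    rw [codE_mod (hΛ _ hwx.1), codE_mod (hΛ _ hwy.1)] at hxy'
    rw [p.h_inj wx hwx wy hwy hxy']
  h_lt := by
    intro x hx
    rw [show (extTree p Λ Tn hΛ).lvl Tn = _ from ext_lvl_high p Λ Tn hΛ hT le_rfl] at hx
    obtain ⟨wx, hwx, hxe⟩ := hx
    have hxe' : codE Λ Tn wx = x := hxe
    subst hxe'
    show p.h (codE Λ Tn wx % Λ) < cardSucc κ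
    rw [codE_mod (hΛ _ hwx.1)]
    exact p.h_lt wx hwx

end Ext2
end Stmt6

namespace Stmt6
section Ext3
variable {κ : Ordinal.{0}} (p : KCond κ) (Λ Tn : Ordinal.{0})
  (hΛ : ∀ x ∈ p.t.node, x < Λ)
  (hT : p.top < Tn) (hTκ : Tn < κ) (hΛκ : Λ < κ)
  (hreg : κ.card.IsRegular) (hord : κ.card.ord = κ) (hℵ : Cardinal.aleph0 < κ.card)

lemma KLE_extCond : KLE κ (extCond p Λ Tn hΛ hT hTκ hΛκ hreg hord hℵ) p := by
  refine ⟨hT.le, ?_, ?_, ?_, ?_, ?_⟩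
  · intro x
    constructor
    · intro hx
      refine ⟨Or.inl hx, ?_⟩
      show extLevel p Λ x ≤ p.top
      rw [extLevel_old p Λ hx]
      exact p.level_le x hx
    · rintro ⟨hO | hN, hlev⟩
      · exact hO
      · obtain ⟨-, h2, -, -, -⟩ := extN_decode p Λ Tn hΛ hN
        have : extLevel p Λ x ≤ p.top := hlev
        rw [extLevel_new p Λ Tn hΛ hN] at this
        exact absurd h2 (not_lt.mpr this)
  · intro x hx y hy
    exact (ext_lt_old_iff p Λ Tn hΛ hy).symm
  · intro x hx
    exact (extLevel_old p Λ hx).symm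
  · rintro ξ ⟨x, hx, rfl⟩
    refine ⟨codE Λ Tn x, ?_, ?_⟩
    · have hlvl : (extCond p Λ Tn hΛ hT hTκ hΛκ hreg hord hℵ).t.lvl
          (extCond p Λ Tn hΛ hT hTκ hΛκ hreg hord hℵ).top
          = (fun x => codE Λ Tn x) '' p.t.lvl p.top := ext_lvl_high p Λ Tn hΛ hT le_rfl
      rw [hlvl]
      exact ⟨x, hx, rfl⟩
    · show p.h (codE Λ Tn x % Λ) = p.h x
      rw [codE_mod (hΛ _ hx.1)]
  · intro x hx y hy hxy
    have hlvl : (extCond p Λ Tn hΛ hT hTκ hΛκ hreg hord hℵ).t.lvl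
        (extCond p Λ Tn hΛ hT hTκ hΛκ hreg hord hℵ).top
        = (fun x => codE Λ Tn x) '' p.t.lvl p.top := ext_lvl_high p Λ Tn hΛ hT le_rfl
    rw [hlvl] at hy
    obtain ⟨w, hw, hye⟩ := hy
    have hye' : codE Λ Tn w = y := hye
    subst hye'
    have hxy' : p.h x = p.h (codE Λ Tn w % Λ) := hxy
    rw [codE_mod (hΛ _ hw.1)] at hxy'
    have hxw : x = w := p.h_inj x hx w hw hxy'
    subst hxw
    have hN : codE Λ Tn x ∈ extN p Λ Tn := ⟨x, hx, Tn, hT, le_rfl, rfl⟩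
    refine Or.inl (Or.inr ⟨hN, Or.inl ⟨hx.1, Or.inr ?_⟩⟩)
    rw [codE_mod (hΛ _ hx.1)]

end Ext3

section Ext4
variable {κ : Ordinal.{0}}
  (hreg : κ.card.IsRegular) (hord : κ.card.ord = κ) (hℵ : Cardinal.aleph0 < κ.card)

include hreg hord hℵ in
lemma exists_ext (p : KCond κ) (Tn : Ordinal.{0}) (hT : p.top < Tn) (hTκ : Tn < κ) :
    ∃ q : KCond κ, KLE κ q p ∧ q.top = Tn := by
  set Λ : Ordinal.{0} := sSup p.t.node + 1 with hΛdef
  have hbdd : BddAbove p.t.node :=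
    ⟨κ, fun x hx => le_of_lt (p.node_sub hx)⟩
  have hΛ : ∀ x ∈ p.t.node, x < Λ := by
    intro x hx
    exact lt_of_le_of_lt (le_csSup hbdd hx) (lt_add_one _)
  have hsup : sSup p.t.node < κ := small_sSup hreg hord hℵ p.node_sub (node_small hreg hord hℵ p)
  have hΛκ : Λ < κ := succ_lt_kappa hord hℵ hsup
  exact ⟨extCond p Λ Tn hΛ hT hTκ hΛκ hreg hord hℵ,
    KLE_extCond p Λ Tn hΛ hT hTκ hΛκ hreg hord hℵ, rfl⟩

include hreg hord hℵ in
lemma dense_top (γ : Ordinal.{0}) (hγ : γ < κ) (p : KCond κ) :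
    ∃ q : KCond κ, KLE κ q p ∧ γ < q.top := by
  rcases lt_or_ge γ p.top with h | h
  · exact ⟨p, KLE_refl p, h⟩
  · obtain ⟨q, hq, htop⟩ := exists_ext hreg hord hℵ p (γ + 1)
      (lt_of_le_of_lt h (lt_add_one _)) (succ_lt_kappa hord hℵ hγ)
    exact ⟨q, hq, htop ▸ lt_add_one γ⟩

end Ext4
end Stmt6

namespace Stmt6
section Union
variable {κ : Ordinal.{0}} (D : Set (KCond κ))

/-- Union of the node sets. -/
def uNode : Set Ordinal.{0} := {x | ∃ p ∈ D, x ∈ p.t.node}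

/-- Union of the ranges of the top-labelling functions. -/
def uR : Set Ordinal.{0} := {ξ | ∃ p ∈ D, ∃ x ∈ p.t.lvl p.top, p.h x = ξ}

/-- The branch through the system labelled by `ξ`. -/
def uB (ξ : Ordinal.{0}) : Set Ordinal.{0} :=
  {z | ∃ p ∈ D, ∃ w ∈ p.t.lvl p.top, p.h w = ξ ∧ (p.t.lt z w ∨ z = w)}

/-- Union of the orders. -/
def uLt (x y : Ordinal.{0}) : Prop := ∃ p ∈ D, p.t.lt x y

open Classical in
/-- The common level function. -/
noncomputable def uLevel (x : Ordinal.{0}) : Ordinal.{0} :=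
  if h : ∃ p ∈ D, x ∈ p.t.node then h.choose.t.level x else 0

section KLElemmas
variable {r p : KCond κ} (h : KLE κ r p)

include h in
lemma _root_.KLE.nsub : p.t.node ⊆ r.t.node := fun x hx => ((h.2.1 x).mp hx).1

include h in
lemma _root_.KLE.lev {x : Ordinal.{0}} (hx : x ∈ p.t.node) : p.t.level x = r.t.level x :=
  h.2.2.2.1 x hx

include h in
lemma _root_.KLE.ltiff {x y : Ordinal.{0}} (hx : x ∈ p.t.node) (hy : y ∈ p.t.node) :
    (p.t.lt x y ↔ r.t.lt x y) := h.2.2.1 x hx y hy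

include h in
lemma branch_to {w ξ z : Ordinal.{0}} (hw : w ∈ p.t.lvl p.top)
    (hξ : p.h w = ξ) (hz : p.t.lt z w ∨ z = w) :
    ∃ w' ∈ r.t.lvl r.top, r.h w' = ξ ∧ (r.t.lt z w' ∨ z = w') := by
  obtain ⟨y, hy, hyξ⟩ := h.2.2.2.2.1 ξ ⟨w, hw, hξ⟩
  have hwy : r.t.lt w y ∨ w = y := h.2.2.2.2.2 w hw y hy (by rw [hξ, hyξ])
  refine ⟨y, hy, hyξ, ?_⟩
  rcases hz with hz | rfl
  · have hz' : r.t.lt z w := (h.ltiff (p.t.lt_mem hz).1 (p.t.lt_mem hz).2).mp hz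
    rcases hwy with hwy | rfl
    · exact Or.inl (r.t.lt_trans' hz' hwy)
    · exact Or.inl hz'
  · exact hwy

end KLElemmas

variable (hdir : ∀ p ∈ D, ∀ q ∈ D, ∃ r ∈ D, KLE κ r p ∧ KLE κ r q)

include hdir in
lemma dir_level {p q : KCond κ} (hp : p ∈ D) (hq : q ∈ D) {x : Ordinal.{0}}
    (hxp : x ∈ p.t.node) (hxq : x ∈ q.t.node) : p.t.level x = q.t.level x := by
  obtain ⟨r, hr, hrp, hrq⟩ := hdir p hp q hq
  rw [hrp.lev hxp, hrq.lev hxq]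

include hdir in
lemma dir_node {p q : KCond κ} (hp : p ∈ D) (hq : q ∈ D) {x : Ordinal.{0}}
    (hx : x ∈ p.t.node) (hle : p.t.level x ≤ q.top) : x ∈ q.t.node := by
  obtain ⟨r, hr, hrp, hrq⟩ := hdir p hp q hq
  exact (hrq.2.1 x).mpr ⟨hrp.nsub hx, by rw [← hrp.lev hx]; exact hle⟩

include hdir in
lemma dir_lt {p q : KCond κ} (hp : p ∈ D) (hq : q ∈ D) {x y : Ordinal.{0}}
    (hxp : x ∈ p.t.node) (hyp : y ∈ p.t.node) (hxq : x ∈ q.t.node) (hyq : y ∈ q.t.node) :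
    (p.t.lt x y ↔ q.t.lt x y) := by
  obtain ⟨r, hr, hrp, hrq⟩ := hdir p hp q hq
  rw [hrp.ltiff hxp hyp, hrq.ltiff hxq hyq]

include hdir in
lemma uLevel_eq {p : KCond κ} (hp : p ∈ D) {x : Ordinal.{0}} (hx : x ∈ p.t.node) :
    uLevel D x = p.t.level x := by
  have hex : ∃ q ∈ D, x ∈ q.t.node := ⟨p, hp, hx⟩
  rw [uLevel, dif_pos hex]
  exact dir_level D hdir hex.choose_spec.1 hp hex.choose_spec.2 hx

include hdir in
lemma uLt_iff {p : KCond κ} (hp : p ∈ D) {x y : Ordinal.{0}}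
    (hx : x ∈ p.t.node) (hy : y ∈ p.t.node) : uLt D x y ↔ p.t.lt x y := by
  constructor
  · rintro ⟨q, hq, hlt⟩
    exact (dir_lt D hdir hq hp (q.t.lt_mem hlt).1 (q.t.lt_mem hlt).2 hx hy).mp hlt
  · intro h
    exact ⟨p, hp, h⟩

lemma uLt_node {x y : Ordinal.{0}} (h : uLt D x y) : x ∈ uNode D ∧ y ∈ uNode D := by
  obtain ⟨p, hp, hlt⟩ := h
  exact ⟨⟨p, hp, (p.t.lt_mem hlt).1⟩, ⟨p, hp, (p.t.lt_mem hlt).2⟩⟩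

lemma uB_node {ξ z : Ordinal.{0}} (h : z ∈ uB D ξ) : z ∈ uNode D := by
  obtain ⟨p, hp, w, hw, -, hz⟩ := h
  rcases hz with hz | rfl
  · exact ⟨p, hp, (p.t.lt_mem hz).1⟩
  · exact ⟨p, hp, hw.1⟩

include hdir in
/-- A branch membership witness can be moved below any given condition. -/
lemma uB_move {ξ z : Ordinal.{0}} (hz : z ∈ uB D ξ) {q : KCond κ} (hq : q ∈ D) :
    ∃ r ∈ D, KLE κ r q ∧ ∃ w ∈ r.t.lvl r.top, r.h w = ξ ∧ (r.t.lt z w ∨ z = w) := by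
  obtain ⟨p, hp, w, hw, hξ, hzw⟩ := hz
  obtain ⟨r, hr, hrp, hrq⟩ := hdir p hp q hq
  exact ⟨r, hr, hrq, branch_to hrp hw hξ hzw⟩

variable (ν : Ordinal.{0} → Ordinal.{0}) (lam : Ordinal.{0})

/-- The new top level. -/
def uNew : Set Ordinal.{0} := {n | ∃ ξ ∈ uR D, ν ξ = n}

/-- The order on the union tree. -/
def uLtF (x y : Ordinal.{0}) : Prop :=
  uLt D x y ∨ (∃ ξ ∈ uR D, y = ν ξ ∧ x ∈ uB D ξ)

open Classical in
/-- The level function on the union tree. -/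
noncomputable def uLevF (x : Ordinal.{0}) : Ordinal.{0} :=
  if x ∈ uNode D then uLevel D x else lam

variable (hν_fresh : ∀ ξ ∈ uR D, ν ξ ∉ uNode D)
  (hν_inj : ∀ ξ ∈ uR D, ∀ ξ' ∈ uR D, ν ξ = ν ξ' → ξ = ξ')
  (hlt_lam : ∀ p ∈ D, p.top < lam)
  (hub : ∀ β, β < lam → ∃ p ∈ D, β < p.top)

omit hν_fresh in
lemma uLtF_new_source {x y : Ordinal.{0}} (h : uLtF D ν x y) (hxN : x ∉ uNode D) : False := by
  rcases h with h | ⟨ξ', hξ', -, hB⟩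
  · exact hxN (uLt_node D h).1
  · exact hxN (uB_node D hB)

lemma uLevF_old {x : Ordinal.{0}} (hx : x ∈ uNode D) : uLevF D lam x = uLevel D x :=
  if_pos hx

lemma uLevF_new {x : Ordinal.{0}} (hx : x ∉ uNode D) : uLevF D lam x = lam :=
  if_neg hx

/-- The union tree, with a new top level of nodes `ν ξ`, `ξ ∈ uR D`. -/
noncomputable def uTree (hdir : ∀ p ∈ D, ∀ q ∈ D, ∃ r ∈ D, KLE κ r p ∧ KLE κ r q)
    (hν_fresh : ∀ ξ ∈ uR D, ν ξ ∉ uNode D)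
    (hν_inj : ∀ ξ ∈ uR D, ∀ ξ' ∈ uR D, ν ξ = ν ξ' → ξ = ξ')
    (hlt_lam : ∀ p ∈ D, p.top < lam)
    (hub : ∀ β, β < lam → ∃ p ∈ D, β < p.top) : LvTree where
  node := uNode D ∪ uNew D ν
  lt := uLtF D ν
  level := uLevF D lam
  lt_mem := by
    rintro x y (h | ⟨ξ, hξ, rfl, hB⟩)
    · exact ⟨Or.inl (uLt_node D h).1, Or.inl (uLt_node D h).2⟩
    · exact ⟨Or.inl (uB_node D hB), Or.inr ⟨ξ, hξ, rfl⟩⟩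
  lt_trans' := by
    rintro a b c hab (hbc | ⟨ξ, hξ, rfl, hB⟩)
    · -- b, c old
      obtain ⟨q, hq, hbc'⟩ := hbc
      have hb : b ∈ uNode D := ⟨q, hq, (q.t.lt_mem hbc').1⟩
      have hab' : uLt D a b := by
        rcases hab with h | ⟨ξ', hξ', rfl, -⟩
        · exact h
        · exact absurd hb (hν_fresh ξ' hξ')
      obtain ⟨p, hp, hab''⟩ := hab'
      obtain ⟨r, hr, hrp, hrq⟩ := hdir p hp q hq
      refine Or.inl ⟨r, hr, r.t.lt_trans'
        ((hrp.ltiff (p.t.lt_mem hab'').1 (p.t.lt_mem hab'').2).mp hab'')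
        ((hrq.ltiff (q.t.lt_mem hbc').1 (q.t.lt_mem hbc').2).mp hbc')⟩
    · -- c new, b ∈ uB ξ
      obtain ⟨q, hq, w, hw, hwξ, hbw⟩ := hB
      have hb : b ∈ uNode D := by
        rcases hbw with h | rfl
        · exact ⟨q, hq, (q.t.lt_mem h).1⟩
        · exact ⟨q, hq, hw.1⟩
      have hab' : uLt D a b := by
        rcases hab with h | ⟨ξ', hξ', rfl, -⟩
        · exact h
        · exact absurd hb (hν_fresh ξ' hξ')
      obtain ⟨p, hp, hab''⟩ := hab'
      obtain ⟨r, hr, hrp, hrq⟩ := hdir p hp q hq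
      obtain ⟨w', hw', hw'ξ, hbw'⟩ := branch_to hrq hw hwξ hbw
      have hab3 : r.t.lt a b :=
        (hrp.ltiff (p.t.lt_mem hab'').1 (p.t.lt_mem hab'').2).mp hab''
      have haw' : r.t.lt a w' := by
        rcases hbw' with h | rfl
        · exact r.t.lt_trans' hab3 h
        · exact hab3
      exact Or.inr ⟨ξ, hξ, rfl, r, hr, w', hw', hw'ξ, Or.inl haw'⟩
  level_mono := by
    rintro x y (h | ⟨ξ, hξ, rfl, hB⟩)
    · obtain ⟨p, hp, hlt⟩ := h
      rw [uLevF_old D lam ⟨p, hp, (p.t.lt_mem hlt).1⟩,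
        uLevF_old D lam ⟨p, hp, (p.t.lt_mem hlt).2⟩,
        uLevel_eq D hdir hp (p.t.lt_mem hlt).1, uLevel_eq D hdir hp (p.t.lt_mem hlt).2]
      exact p.t.level_mono hlt
    · obtain ⟨q, hq, w, hw, hwξ, hxw⟩ := hB
      have hx : x ∈ uNode D := by
        rcases hxw with h | rfl
        · exact ⟨q, hq, (q.t.lt_mem h).1⟩
        · exact ⟨q, hq, hw.1⟩
      rw [uLevF_old D lam hx, uLevF_new D lam (hν_fresh ξ hξ)]
      have hxq : x ∈ q.t.node := by
        rcases hxw with h | rfl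
        · exact (q.t.lt_mem h).1
        · exact hw.1
      rw [uLevel_eq D hdir hq hxq]
      refine lt_of_le_of_lt ?_ (hlt_lam q hq)
      rcases hxw with h | rfl
      · rw [← hw.2]
        exact le_of_lt (q.t.level_mono h)
      · exact le_of_eq hw.2
  pred_linear := by
    rintro x y z hyx hzx
    by_cases hxO : x ∈ uNode D
    · have hy : uLt D y x := by
        rcases hyx with h | ⟨ξ, hξ, rfl, -⟩
        · exact h
        · exact absurd hxO (hν_fresh ξ hξ)
      have hz : uLt D z x := by
        rcases hzx with h | ⟨ξ, hξ, rfl, -⟩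
        · exact h
        · exact absurd hxO (hν_fresh ξ hξ)
      obtain ⟨p, hp, hy'⟩ := hy
      obtain ⟨q, hq, hz'⟩ := hz
      obtain ⟨r, hr, hrp, hrq⟩ := hdir p hp q hq
      have hy'' : r.t.lt y x :=
        (hrp.ltiff (p.t.lt_mem hy').1 (p.t.lt_mem hy').2).mp hy'
      have hz'' : r.t.lt z x :=
        (hrq.ltiff (q.t.lt_mem hz').1 (q.t.lt_mem hz').2).mp hz'
      rcases r.t.pred_linear hy'' hz'' with h | h | h
      exacts [Or.inl (Or.inl ⟨r, hr, h⟩), Or.inr (Or.inl h),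
        Or.inr (Or.inr (Or.inl ⟨r, hr, h⟩))]
    · have hy : ∃ ξ ∈ uR D, x = ν ξ ∧ y ∈ uB D ξ := by
        rcases hyx with h | h
        · exact absurd (uLt_node D h).2 hxO
        · exact h
      have hz : ∃ ξ ∈ uR D, x = ν ξ ∧ z ∈ uB D ξ := by
        rcases hzx with h | h
        · exact absurd (uLt_node D h).2 hxO
        · exact h
      obtain ⟨ξ, hξ, rfl, hyB⟩ := hy
      obtain ⟨ξ', hξ', hee, hzB⟩ := hz
      have : ξ' = ξ := hν_inj ξ' hξ' ξ hξ hee.symm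
      subst this
      obtain ⟨p, hp, wp, hwp, hwpξ, hyw⟩ := hyB
      obtain ⟨q, hq, wq, hwq, hwqξ, hzw⟩ := hzB
      obtain ⟨r, hr, hrp, hrq⟩ := hdir p hp q hq
      obtain ⟨w1, hw1, hw1ξ, hyw1⟩ := branch_to hrp hwp hwpξ hyw
      obtain ⟨w2, hw2, hw2ξ, hzw2⟩ := branch_to hrq hwq hwqξ hzw
      have hww : w1 = w2 := r.h_inj w1 hw1 w2 hw2 (by rw [hw1ξ, hw2ξ])
      subst hww
      rcases hyw1 with hy1 | rfl <;> rcases hzw2 with hz1 | hz1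
      · rcases r.t.pred_linear hy1 hz1 with h | h | h
        exacts [Or.inl (Or.inl ⟨r, hr, h⟩), Or.inr (Or.inl h),
          Or.inr (Or.inr (Or.inl ⟨r, hr, h⟩))]
      · exact Or.inl (Or.inl ⟨r, hr, hz1 ▸ hy1⟩)
      · exact Or.inr (Or.inr (Or.inl ⟨r, hr, hz1⟩))
      · exact Or.inr (Or.inl hz1.symm)
  pred_ex := by
    rintro x hx β hβ
    rcases hx with hxO | ⟨ξ, hξ, rfl⟩
    · obtain ⟨p, hp, hxp⟩ := hxO
      rw [uLevF_old D lam ⟨p, hp, hxp⟩, uLevel_eq D hdir hp hxp] at hβ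
      obtain ⟨y, hy, hlev⟩ := p.t.pred_ex x hxp β hβ
      refine ⟨y, Or.inl ⟨p, hp, hy⟩, ?_⟩
      rw [uLevF_old D lam ⟨p, hp, (p.t.lt_mem hy).1⟩, uLevel_eq D hdir hp (p.t.lt_mem hy).1]
      exact hlev
    · rw [uLevF_new D lam (hν_fresh ξ hξ)] at hβ
      obtain ⟨q, hq, hqβ⟩ := hub β hβ
      obtain ⟨p₀, hp₀, w₀, hw₀, hw₀ξ⟩ := hξ
      obtain ⟨r, hr, hrp, hrq⟩ := hdir p₀ hp₀ q hq
      have hrtop : β < r.top := lt_of_lt_of_le hqβ hrq.1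
      obtain ⟨w, hw, hwξ, -⟩ := branch_to hrp hw₀ hw₀ξ (Or.inr rfl)
      obtain ⟨y, hy, hylev⟩ := r.t.pred_ex w hw.1 β (by rw [hw.2]; exact hrtop)
      refine ⟨y, Or.inr ⟨ξ, ⟨p₀, hp₀, w₀, hw₀, hw₀ξ⟩, rfl, r, hr, w, hw, hwξ, Or.inl hy⟩, ?_⟩
      rw [uLevF_old D lam ⟨r, hr, (r.t.lt_mem hy).1⟩, uLevel_eq D hdir hr (r.t.lt_mem hy).1]
      exact hylev

end Union
end Stmt6

namespace Stmt6
section Union2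
variable {κ : Ordinal.{0}} (D : Set (KCond κ))
  (hdir : ∀ p ∈ D, ∀ q ∈ D, ∃ r ∈ D, KLE κ r p ∧ KLE κ r q)
  (ν : Ordinal.{0} → Ordinal.{0}) (lam : Ordinal.{0})
  (hν_fresh : ∀ ξ ∈ uR D, ν ξ ∉ uNode D)
  (hν_inj : ∀ ξ ∈ uR D, ∀ ξ' ∈ uR D, ν ξ = ν ξ' → ξ = ξ')
  (hlt_lam : ∀ p ∈ D, p.top < lam)
  (hub : ∀ β, β < lam → ∃ p ∈ D, β < p.top)

include hdir in
/-- A `uLt`-predecessor of a node of `p` is itself a node of `p`. -/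
lemma uLt_pull {p : KCond κ} (hp : p ∈ D) {x z : Ordinal.{0}} (hx : x ∈ p.t.node)
    (h : uLt D z x) : p.t.lt z x ∧ z ∈ p.t.node := by
  obtain ⟨q, hq, hlt⟩ := h
  obtain ⟨r, hr, hrp, hrq⟩ := hdir p hp q hq
  have hzr : r.t.lt z x :=
    (hrq.ltiff (q.t.lt_mem hlt).1 (q.t.lt_mem hlt).2).mp hlt
  have hzn : z ∈ p.t.node := by
    refine (hrp.2.1 z).mpr ⟨(r.t.lt_mem hzr).1, ?_⟩
    have : r.t.level z < r.t.level x := r.t.level_mono hzr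
    rw [← hrp.lev hx] at this
    exact le_of_lt (lt_of_lt_of_le this (p.level_le x hx))
  exact ⟨(hrp.ltiff hzn hx).mpr hzr, hzn⟩

include hdir hν_fresh hν_inj hlt_lam hub in
lemma uTree_lvl_low {p : KCond κ} (hp : p ∈ D) {β : Ordinal.{0}} (hβ : β ≤ p.top) :
    (uTree D ν lam hdir hν_fresh hν_inj hlt_lam hub).lvl β = p.t.lvl β := by
  ext x
  constructor
  · rintro ⟨hO | ⟨ξ, hξ, rfl⟩, hlev⟩
    · obtain ⟨q, hq, hxq⟩ := hO
      have hlev' : uLevF D lam x = β := hlev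
      rw [uLevF_old D lam ⟨q, hq, hxq⟩, uLevel_eq D hdir hq hxq] at hlev'
      have hxp : x ∈ p.t.node := dir_node D hdir hq hp hxq (hlev' ▸ hβ)
      exact ⟨hxp, by rw [dir_level D hdir hp hq hxp hxq]; exact hlev'⟩
    · have hlev' : uLevF D lam (ν ξ) = β := hlev
      rw [uLevF_new D lam (hν_fresh ξ hξ)] at hlev'
      exact absurd (hlev' ▸ lt_of_le_of_lt hβ (hlt_lam p hp)) (lt_irrefl _)
  · rintro ⟨hx, hlev⟩
    refine ⟨Or.inl ⟨p, hp, hx⟩, ?_⟩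
    show uLevF D lam x = β
    rw [uLevF_old D lam ⟨p, hp, hx⟩, uLevel_eq D hdir hp hx]
    exact hlev

include hdir hν_fresh hlt_lam in
lemma uTree_lvl_lam :
    (uTree D ν lam hdir hν_fresh hν_inj hlt_lam hub).lvl lam = ν '' (uR D) := by
  ext x
  constructor
  · rintro ⟨hO | ⟨ξ, hξ, rfl⟩, hlev⟩
    · obtain ⟨q, hq, hxq⟩ := hO
      have hlev' : uLevF D lam x = lam := hlev
      rw [uLevF_old D lam ⟨q, hq, hxq⟩, uLevel_eq D hdir hq hxq] at hlev'
      exact absurd (hlev' ▸ lt_of_le_of_lt (q.level_le x hxq) (hlt_lam q hq)) (lt_irrefl _)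
    · exact ⟨ξ, hξ, rfl⟩
  · rintro ⟨ξ, hξ, rfl⟩
    exact ⟨Or.inr ⟨ξ, hξ, rfl⟩, uLevF_new D lam (hν_fresh ξ hξ)⟩

include hdir hν_fresh hlt_lam in
lemma uTree_lvl_empty {β : Ordinal.{0}} (hβ : lam < β) :
    (uTree D ν lam hdir hν_fresh hν_inj hlt_lam hub).lvl β = ∅ := by
  ext x
  simp only [Set.mem_empty_iff_false, iff_false]
  rintro ⟨hO | ⟨ξ, hξ, rfl⟩, hlev⟩
  · obtain ⟨q, hq, hxq⟩ := hO
    have hlev' : uLevF D lam x = β := hlev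
    rw [uLevF_old D lam ⟨q, hq, hxq⟩, uLevel_eq D hdir hq hxq] at hlev'
    exact absurd (hlev' ▸ lt_of_le_of_lt (q.level_le x hxq) ((hlt_lam q hq).trans hβ))
      (lt_irrefl _)
  · have hlev' : uLevF D lam (ν ξ) = β := hlev
    rw [uLevF_new D lam (hν_fresh ξ hξ)] at hlev'
    exact absurd (hlev' ▸ hβ) (lt_irrefl _)

/-- The labelling of the new top level. -/
noncomputable def uH (n : Ordinal.{0}) : Ordinal.{0} := sInf {ξ | ξ ∈ uR D ∧ ν ξ = n}

include hν_inj in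
lemma uH_eq {ξ : Ordinal.{0}} (hξ : ξ ∈ uR D) : uH D ν (ν ξ) = ξ := by
  have : {ξ' | ξ' ∈ uR D ∧ ν ξ' = ν ξ} = {ξ} := by
    ext ξ'
    constructor
    · rintro ⟨h1, h2⟩
      exact hν_inj ξ' h1 ξ hξ h2
    · rintro rfl
      exact ⟨hξ, rfl⟩
  rw [uH, this, csInf_singleton]

end Union2
end Stmt6

namespace Stmt6
section Union3
variable {κ : Ordinal.{0}} (D : Set (KCond κ))
  (hdir : ∀ p ∈ D, ∀ q ∈ D, ∃ r ∈ D, KLE κ r p ∧ KLE κ r q)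
  (ν : Ordinal.{0} → Ordinal.{0}) (lam : Ordinal.{0})
  (hν_fresh : ∀ ξ ∈ uR D, ν ξ ∉ uNode D)
  (hν_inj : ∀ ξ ∈ uR D, ∀ ξ' ∈ uR D, ν ξ = ν ξ' → ξ = ξ')
  (hν_lt : ∀ ξ ∈ uR D, ν ξ < κ)
  (hlt_lam : ∀ p ∈ D, p.top < lam)
  (hub : ∀ β, β < lam → ∃ p ∈ D, β < p.top)
  (hlamκ : lam < κ)
  (hlam_ni : ¬ InaccOrd lam)
  (hR_small : Cardinal.mk (uR D) < Cardinal.lift.{1} κ.card)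
  (hne : D.Nonempty)
  (hreg : κ.card.IsRegular) (hord : κ.card.ord = κ) (hℵ : Cardinal.aleph0 < κ.card)

include hdir hν_fresh hν_inj hν_lt hlt_lam hub hlamκ hlam_ni hR_small hne hord hℵ in
/-- The lower bound for a directed family without maximal top. -/
noncomputable def uCond : KCond κ where
  t := uTree D ν lam hdir hν_fresh hν_inj hlt_lam hub
  top := lam
  h := uH D ν
  node_sub := by
    rintro n (⟨p, hp, hn⟩ | ⟨ξ, hξ, rfl⟩)
    · exact p.node_sub hn
    · exact hν_lt ξ hξ
  top_lt := hlamκ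
  level_le := by
    rintro n (⟨p, hp, hn⟩ | ⟨ξ, hξ, rfl⟩)
    · show uLevF D lam n ≤ lam
      rw [uLevF_old D lam ⟨p, hp, hn⟩, uLevel_eq D hdir hp hn]
      exact le_of_lt (lt_of_le_of_lt (p.level_le n hn) (hlt_lam p hp))
    · show uLevF D lam (ν ξ) ≤ lam
      rw [uLevF_new D lam (hν_fresh ξ hξ)]
  levels_ne := by
    intro β hβ
    rcases lt_or_eq_of_le hβ with hβ | hβe
    · obtain ⟨p, hp, hp'⟩ := hub β hβ
      rw [uTree_lvl_low D hdir ν lam hν_fresh hν_inj hlt_lam hub hp hp'.le]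
      exact p.levels_ne β hp'.le
    · rw [hβe, uTree_lvl_lam D hdir ν lam hν_fresh hν_inj hlt_lam hub]
      obtain ⟨p, hp⟩ := hne
      obtain ⟨x, hx⟩ := p.levels_ne p.top le_rfl
      exact ⟨ν (p.h x), p.h x, ⟨p, hp, x, hx, rfl⟩, rfl⟩
  small := by
    intro β
    rcases lt_trichotomy β lam with hβ | hβe | hβ
    · obtain ⟨p, hp, hp'⟩ := hub β hβ
      rw [uTree_lvl_low D hdir ν lam hν_fresh hν_inj hlt_lam hub hp hp'.le]
      exact p.small β
    · rw [hβe, uTree_lvl_lam D hdir ν lam hν_fresh hν_inj hlt_lam hub]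
      exact lt_of_le_of_lt Cardinal.mk_image_le hR_small
    · rw [uTree_lvl_empty D hdir ν lam hν_fresh hν_inj hlt_lam hub hβ]
      exact empty_lvl_small hord hℵ
  normal := by
    rintro x hx β hβ1 hβ2
    rcases hx with hO | ⟨ξ, hξ, rfl⟩
    · obtain ⟨p, hp, hxp⟩ := hO
      have hlev : uLevF D lam x = p.t.level x := by
        rw [uLevF_old D lam ⟨p, hp, hxp⟩, uLevel_eq D hdir hp hxp]
      rcases lt_or_eq_of_le hβ2 with hβ | hβe
      · obtain ⟨q, hq, hq'⟩ := hub β hβ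
        obtain ⟨r, hr, hrp, hrq⟩ := hdir p hp q hq
        have hxr : x ∈ r.t.node := hrp.nsub hxp
        have hlevr : r.t.level x ≤ β := by
          rw [← hrp.lev hxp, ← hlev]
          exact hβ1
        obtain ⟨y, hy, hor⟩ := r.normal x hxr β hlevr (le_of_lt (lt_of_lt_of_le hq' hrq.1))
        refine ⟨y, ?_, ?_⟩
        · rw [uTree_lvl_low D hdir ν lam hν_fresh hν_inj hlt_lam hub hr
            (le_of_lt (lt_of_lt_of_le hq' hrq.1))]
          exact hy
        · rcases hor with h | h
          · exact Or.inl (Or.inl ⟨r, hr, h⟩)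
          · exact Or.inr h
      · obtain ⟨w, hw, hor⟩ := p.normal x hxp p.top (p.level_le x hxp) le_rfl
        have hξw : p.h w ∈ uR D := ⟨p, hp, w, hw, rfl⟩
        refine ⟨ν (p.h w), ?_, Or.inl (Or.inr ⟨p.h w, hξw, rfl, p, hp, w, hw, rfl, hor⟩)⟩
        rw [hβe, uTree_lvl_lam D hdir ν lam hν_fresh hν_inj hlt_lam hub]
        exact ⟨p.h w, hξw, rfl⟩
    · have hlev : uLevF D lam (ν ξ) = lam := uLevF_new D lam (hν_fresh ξ hξ)
      have hβlam : β = lam := le_antisymm hβ2 (by rw [← hlev]; exact hβ1)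
      exact ⟨ν ξ, ⟨Or.inr ⟨ξ, hξ, rfl⟩, by rw [hβlam]; exact hlev⟩, Or.inr rfl⟩
  regr := by
    intro δ hδ hδi
    have hδlam : δ < lam := by
      rcases lt_or_eq_of_le hδ with h | hδe
      · exact h
      · exact absurd (hδe ▸ hδi) hlam_ni
    obtain ⟨p, hp, hp'⟩ := hub δ hδlam
    obtain ⟨f, hf1, hf2⟩ := p.regr δ hp'.le hδi
    have hlvl := uTree_lvl_low D hdir ν lam hν_fresh hν_inj hlt_lam hub hp hp'.le (β := δ)
    refine ⟨f, ?_, ?_⟩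
    · intro x hx
      rw [hlvl] at hx
      exact Or.inl ⟨p, hp, hf1 x hx⟩
    · intro x hx y hy hinc z hzx hzy
      rw [hlvl] at hx hy
      have hinc' : p.t.Incomp x y :=
        ⟨fun hc => hinc.1 (Or.inl ⟨p, hp, hc⟩), fun hc => hinc.2.1 (Or.inl ⟨p, hp, hc⟩),
          hinc.2.2⟩
      have hzx' : uLt D z x := by
        rcases hzx with h | ⟨ξ, hξ, hee, -⟩
        · exact h
        · exact absurd (hee ▸ ⟨p, hp, hx.1⟩) (hν_fresh ξ hξ)
      have hzy' : uLt D z y := by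
        rcases hzy with h | ⟨ξ, hξ, hee, -⟩
        · exact h
        · exact absurd (hee ▸ ⟨p, hp, hy.1⟩) (hν_fresh ξ hξ)
      obtain ⟨h1, h2⟩ := hf2 x hx y hy hinc' z
        (uLt_pull D hdir hp hx.1 hzx').1 (uLt_pull D hdir hp hy.1 hzy').1
      exact ⟨Or.inl ⟨p, hp, h1⟩, Or.inl ⟨p, hp, h2⟩⟩
  h_inj := by
    intro x hx y hy hxy
    have hlvl := uTree_lvl_lam D hdir ν lam hν_fresh hν_inj hlt_lam hub
    rw [hlvl] at hx hy
    obtain ⟨ξ, hξ, hxe⟩ := hx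
    obtain ⟨ξ', hξ', hye⟩ := hy
    subst hxe
    subst hye
    rw [uH_eq D ν hν_inj hξ, uH_eq D ν hν_inj hξ'] at hxy
    rw [hxy]
  h_lt := by
    intro x hx
    have hlvl := uTree_lvl_lam D hdir ν lam hν_fresh hν_inj hlt_lam hub
    rw [hlvl] at hx
    obtain ⟨ξ, hξ, hxe⟩ := hx
    subst hxe
    rw [uH_eq D ν hν_inj hξ]
    obtain ⟨p, hp, w, hw, hwξ⟩ := hξ
    exact hwξ ▸ p.h_lt w hw

include hord hℵ in
lemma KLE_uCond {p : KCond κ} (hp : p ∈ D) :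
    KLE κ (uCond D hdir ν lam hν_fresh hν_inj hν_lt hlt_lam hub hlamκ hlam_ni
      hR_small hne hord hℵ) p := by
  refine ⟨le_of_lt (hlt_lam p hp), ?_, ?_, ?_, ?_, ?_⟩
  · intro x
    constructor
    · intro hx
      refine ⟨Or.inl ⟨p, hp, hx⟩, ?_⟩
      show uLevF D lam x ≤ p.top
      rw [uLevF_old D lam ⟨p, hp, hx⟩, uLevel_eq D hdir hp hx]
      exact p.level_le x hx
    · rintro ⟨hO | ⟨ξ, hξ, rfl⟩, hlev⟩
      · obtain ⟨q, hq, hxq⟩ := hO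
        have hlev' : uLevF D lam x ≤ p.top := hlev
        rw [uLevF_old D lam ⟨q, hq, hxq⟩, uLevel_eq D hdir hq hxq] at hlev'
        exact dir_node D hdir hq hp hxq hlev'
      · have hlev' : uLevF D lam (ν ξ) ≤ p.top := hlev
        rw [uLevF_new D lam (hν_fresh ξ hξ)] at hlev'
        exact absurd (lt_of_le_of_lt hlev' (hlt_lam p hp)) (lt_irrefl _)
  · intro x hx y hy
    constructor
    · intro h
      exact Or.inl ⟨p, hp, h⟩
    · rintro (h | ⟨ξ, hξ, rfl, -⟩)
      · exact (uLt_iff D hdir hp hx hy).mp h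
      · exact absurd ⟨p, hp, hy⟩ (hν_fresh ξ hξ)
  · intro x hx
    show p.t.level x = uLevF D lam x
    rw [uLevF_old D lam ⟨p, hp, hx⟩, uLevel_eq D hdir hp hx]
  · rintro ξ ⟨x, hx, rfl⟩
    have hξ : p.h x ∈ uR D := ⟨p, hp, x, hx, rfl⟩
    refine ⟨ν (p.h x), ?_, ?_⟩
    · have hlvl := uTree_lvl_lam D hdir ν lam hν_fresh hν_inj hlt_lam hub
      show ν (p.h x) ∈ (uTree D ν lam hdir hν_fresh hν_inj hlt_lam hub).lvl lam
      rw [hlvl]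
      exact ⟨p.h x, hξ, rfl⟩
    · exact uH_eq D ν hν_inj hξ
  · intro x hx y hy hxy
    have hlvl := uTree_lvl_lam D hdir ν lam hν_fresh hν_inj hlt_lam hub
    have hy' : y ∈ (uTree D ν lam hdir hν_fresh hν_inj hlt_lam hub).lvl lam := hy
    rw [hlvl] at hy'
    obtain ⟨ξ, hξ, hye⟩ := hy'
    subst hye
    have hxy' : p.h x = ξ := by rw [hxy]; exact uH_eq D ν hν_inj hξ
    exact Or.inl (Or.inr ⟨ξ, hξ, rfl, p, hp, x, hx, hxy', Or.inr rfl⟩)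

end Union3
end Stmt6

namespace Stmt6
section Assemble
variable {κ : Ordinal.{0}}
  (hreg : κ.card.IsRegular) (hord : κ.card.ord = κ) (hℵ : Cardinal.aleph0 < κ.card)

lemma max_bound (D : Set (KCond κ))
    (hdir : ∀ p ∈ D, ∀ q ∈ D, ∃ r ∈ D, KLE κ r p ∧ KLE κ r q)
    {p₀ : KCond κ} (hp₀ : p₀ ∈ D) (hmax : ∀ p ∈ D, p.top ≤ p₀.top) :
    ∀ q ∈ D, KLE κ p₀ q := by
  intro q hq
  obtain ⟨r, hr, hrp, hrq⟩ := hdir p₀ hp₀ q hq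
  exact KLE_of_eqtop hrp (le_antisymm (hmax r hr) hrp.1) hrq

include hreg hord hℵ in
lemma union_bound {γ : Ordinal.{0}} (hγ : γ < κ) (D : Set (KCond κ))
    (hdir : ∀ p ∈ D, ∀ q ∈ D, ∃ r ∈ D, KLE κ r p ∧ KLE κ r q)
    (hne : D.Nonempty) (htops : ∀ p ∈ D, γ < p.top)
    (hsize : Cardinal.mk D ≤ Cardinal.lift.{1} γ.card)
    (hnomax : ∀ p ∈ D, ∃ q ∈ D, p.top < q.top) :
    ∃ r : KCond κ, γ < r.top ∧ ∀ p ∈ D, KLE κ r p := by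
  have hDsmall : Cardinal.mk D < Cardinal.lift.{1} κ.card :=
    hsize.trans_lt (Cardinal.lift_lt.mpr ((card_lt_iff hord).mp hγ))
  set T : Set Ordinal.{0} := (fun p : KCond κ => p.top) '' D with hTdef
  have hTbdd : BddAbove T := ⟨κ, by rintro t ⟨p, hp, rfl⟩; exact le_of_lt p.top_lt⟩
  have hTne : T.Nonempty := hne.image _
  set lam : Ordinal.{0} := sSup T with hlamdef
  have hlt_lam : ∀ p ∈ D, p.top < lam := by
    intro p hp
    obtain ⟨q, hq, hpq⟩ := hnomax p hp
    exact lt_of_lt_of_le hpq (le_csSup hTbdd ⟨q, hq, rfl⟩)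
  have hub : ∀ β, β < lam → ∃ p ∈ D, β < p.top := by
    intro β hβ
    obtain ⟨t, ⟨p, hp, rfl⟩, hβt⟩ := (lt_csSup_iff hTbdd hTne).mp hβ
    exact ⟨p, hp, hβt⟩
  have hγlam : γ < lam := by
    obtain ⟨p, hp⟩ := hne
    exact (htops p hp).trans (hlt_lam p hp)
  have hTsub : T ⊆ Set.Iio κ := by rintro t ⟨p, hp, rfl⟩; exact p.top_lt
  have hTsmall : Cardinal.mk T < Cardinal.lift.{1} κ.card :=
    lt_of_le_of_lt Cardinal.mk_image_le hDsmall
  have hlamκ : lam < κ := small_sSup hreg hord hℵ hTsub hTsmall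
  have hlam_ni : ¬ InaccOrd lam := by
    rintro ⟨hinacc, hordlam⟩
    obtain ⟨c₀, hc₀, hlift⟩ := Cardinal.le_lift_iff.mp
      (le_trans Cardinal.mk_image_le hsize : Cardinal.mk T ≤ Cardinal.lift.{1} γ.card)
    obtain ⟨f, hrange⟩ := exists_fun_of_small hlift.symm
    have hlamsup : lam = iSup f := by rw [hlamdef, ← hrange]; rfl
    have hflt : ∀ i, f i < iSup f := by
      intro i
      have hfi : f i ∈ T := hrange ▸ Set.mem_range_self i
      obtain ⟨p, hp, he⟩ := hfi
      rw [← hlamsup, ← he]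
      exact hlt_lam p hp
    have hcof : lam.cof ≤ c₀ := by
      rw [hlamsup]
      exact (Ordinal.cof_iSup_le hflt).trans_eq (Cardinal.mk_out c₀)
    have hcof2 : lam.card ≤ lam.cof := by
      have := hinacc.le_cof_ord
      rwa [hordlam] at this
    have hγc : γ.card < lam.card := Cardinal.lt_ord.mp (by rw [hordlam]; exact hγlam)
    exact absurd ((hcof2.trans hcof).trans hc₀) (not_le.mpr hγc)
  -- smallness of the union of the node sets
  have hNodeEq : uNode D = ⋃ (p : D), (p.1).t.node := by
    ext x
    constructor
    · rintro ⟨p, hp, hx⟩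
      exact Set.mem_iUnion.mpr ⟨⟨p, hp⟩, hx⟩
    · intro hx
      obtain ⟨p, hx⟩ := Set.mem_iUnion.mp hx
      exact ⟨p.1, p.2, hx⟩
  have hNsmall : Cardinal.mk (uNode D) < Cardinal.lift.{1} κ.card := by
    rw [hNodeEq]
    refine lt_of_le_of_lt Cardinal.mk_iUnion_le_sum_mk ?_
    exact sum_small hreg _ hDsmall (fun p => node_small hreg hord hℵ p.1)
  have hRsetEq : uR D = ⋃ (p : D), (p.1).h '' ((p.1).t.lvl (p.1).top) := by
    ext ξ
    constructor
    · rintro ⟨p, hp, x, hx, rfl⟩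
      exact Set.mem_iUnion.mpr ⟨⟨p, hp⟩, x, hx, rfl⟩
    · intro hξ
      obtain ⟨p, x, hx, rfl⟩ := Set.mem_iUnion.mp hξ
      exact ⟨p.1, p.2, x, hx, rfl⟩
  have hRsmall : Cardinal.mk (uR D) < Cardinal.lift.{1} κ.card := by
    rw [hRsetEq]
    refine lt_of_le_of_lt Cardinal.mk_iUnion_le_sum_mk ?_
    exact sum_small hreg _ hDsmall
      (fun p => lt_of_le_of_lt Cardinal.mk_image_le (p.1.small p.1.top))
  -- fresh codes for the new level
  set Λ : Ordinal.{0} := sSup (uNode D) + 1 with hΛdef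
  have hNbdd : BddAbove (uNode D) := by
    refine ⟨κ, ?_⟩
    rintro x ⟨p, hp, hx⟩
    exact le_of_lt (p.node_sub hx)
  have hΛ : ∀ x ∈ uNode D, x < Λ := fun x hx =>
    lt_of_le_of_lt (le_csSup hNbdd hx) (lt_add_one _)
  have hΛκ : Λ < κ := succ_lt_kappa hord hℵ
    (small_sSup hreg hord hℵ (by rintro x ⟨p, hp, hx⟩; exact p.node_sub hx) hNsmall)
  have hinj : Function.Injective (fun o : Set.Iio κ =>
      (⟨Λ + o.1, le_self_add (a := Λ) (b := o.1), add_lt_kappa hord hℵ hΛκ o.2⟩ : Set.Ico Λ κ)) := by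
    intro a b hab
    have : Λ + a.1 = Λ + b.1 := congrArg Subtype.val hab
    exact Subtype.ext ((add_right_inj Λ).mp this)
  have hIco : Cardinal.mk (uR D) ≤ Cardinal.mk (Set.Ico Λ κ) := by
    refine le_trans hRsmall.le ?_
    rw [← Ordinal.mk_Iio_ordinal κ]
    exact Cardinal.mk_le_of_injective hinj
  obtain ⟨emb⟩ := (Cardinal.le_def _ _).mp hIco
  classical
  set ν : Ordinal.{0} → Ordinal.{0} :=
    fun ξ => if h : ξ ∈ uR D then (emb ⟨ξ, h⟩).1 else 0 with hνdef
  have hν_mem : ∀ ξ (h : ξ ∈ uR D), ν ξ ∈ Set.Ico Λ κ := by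
    intro ξ h
    rw [hνdef]
    simp only [dif_pos h]
    exact (emb ⟨ξ, h⟩).2
  have hν_fresh : ∀ ξ ∈ uR D, ν ξ ∉ uNode D := by
    intro ξ h hmem
    exact absurd (hν_mem ξ h).1 (not_le.mpr (hΛ _ hmem))
  have hν_inj : ∀ ξ ∈ uR D, ∀ ξ' ∈ uR D, ν ξ = ν ξ' → ξ = ξ' := by
    intro ξ h ξ' h' he
    rw [hνdef] at he
    simp only [dif_pos h, dif_pos h'] at he
    have := emb.injective (Subtype.ext he)
    exact congrArg Subtype.val this
  have hν_lt : ∀ ξ ∈ uR D, ν ξ < κ := fun ξ h => (hν_mem ξ h).2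
  refine ⟨uCond D hdir ν lam hν_fresh hν_inj hν_lt hlt_lam hub hlamκ hlam_ni
    hRsmall hne hord hℵ, hγlam, ?_⟩
  intro p hp
  exact KLE_uCond D hdir ν lam hν_fresh hν_inj hν_lt hlt_lam hub hlamκ hlam_ni
    hRsmall hne hord hℵ hp

include hreg hord hℵ in
/-- Part 1(b): any small directed set of conditions of top `> γ` has a lower bound
of top `> γ`. -/
lemma directed_bound {γ : Ordinal.{0}} (hγ : γ < κ) (D : Set (KCond κ))
    (htops : ∀ p ∈ D, γ < p.top)
    (hdir : ∀ p ∈ D, ∀ q ∈ D, ∃ r ∈ D, KLE κ r p ∧ KLE κ r q)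
    (hsize : Cardinal.mk D ≤ Cardinal.lift.{1} γ.card) :
    ∃ r : KCond κ, γ < r.top ∧ ∀ p ∈ D, KLE κ r p := by
  rcases D.eq_empty_or_nonempty with rfl | hne
  · obtain ⟨p, hp⟩ := exists_chain_cond hord hℵ (γ + 1) (succ_lt_kappa hord hℵ hγ)
    refine ⟨p, hp ▸ lt_add_one γ, ?_⟩
    rintro q ⟨⟩
  · by_cases hmax : ∃ p₀ ∈ D, ∀ p ∈ D, p.top ≤ p₀.top
    · obtain ⟨p₀, hp₀, hm⟩ := hmax
      exact ⟨p₀, htops p₀ hp₀, max_bound D hdir hp₀ hm⟩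
    · push_neg at hmax
      refine union_bound hreg hord hℵ hγ D hdir hne htops hsize ?_
      intro p hp
      obtain ⟨q, hq, hpq⟩ := hmax p hp
      exact ⟨q, hq, hpq⟩

end Assemble
end Stmt6

/-- Let `κ` be Mahlo.  For each `γ < κ` the set
`D_γ = {(t,h) ∈ K_κ : ht(t) > γ}` is dense in `K_κ` and `|γ|⁺`-directed-closed;
hence `K_κ` is almost `κ`-directed-closed. -/
theorem stmt_6 (κ : Ordinal.{0}) (hκ : MahloOrd κ) :
    (∀ γ, γ < κ →
      (∀ p : KCond κ, ∃ q : KCond κ, KLE κ q p ∧ γ < q.top) ∧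
      (∀ D : Set (KCond κ), (∀ p ∈ D, γ < p.top) →
        (∀ p ∈ D, ∀ q ∈ D, ∃ r ∈ D, KLE κ r p ∧ KLE κ r q) →
        Cardinal.mk D ≤ Cardinal.lift.{1} γ.card →
        ∃ r : KCond κ, γ < r.top ∧ ∀ p ∈ D, KLE κ r p)) ∧
    (∀ γ, γ < κ → ∃ D : Set (KCond κ),
      (∀ p : KCond κ, ∃ q ∈ D, KLE κ q p) ∧
      (∀ D' : Set (KCond κ), D' ⊆ D →
        (∀ p ∈ D', ∀ q ∈ D', ∃ r ∈ D', KLE κ r p ∧ KLE κ r q) →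
        Cardinal.mk D' ≤ Cardinal.lift.{1} γ.card →
        ∃ r ∈ D, ∀ p ∈ D', KLE κ r p)) := by
  obtain ⟨⟨hinacc, hord⟩, -⟩ := hκ
  have hreg : κ.card.IsRegular := hinacc.isRegular
  have hℵ : Cardinal.aleph0 < κ.card := hinacc.1
  constructor
  · intro γ hγ
    exact ⟨Stmt6.dense_top hreg hord hℵ γ hγ,
      fun D htops hdir hsize => Stmt6.directed_bound hreg hord hℵ hγ D htops hdir hsize⟩
  · intro γ hγ
    refine ⟨{p : KCond κ | γ < p.top}, ?_, ?_⟩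
    · intro p
      obtain ⟨q, h1, h2⟩ := Stmt6.dense_top hreg hord hℵ γ hγ p
      exact ⟨q, h2, h1⟩
    · intro D' hsub hdir hsize
      obtain ⟨r, hr1, hr2⟩ := Stmt6.directed_bound hreg hord hℵ hγ D'
        (fun p hp => hsub hp) hdir hsize
      exact ⟨r, hr1, hr2⟩
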